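/- Let θ be a semi-basic 1-form on E which is not d_J-closed (d_Jθ ≠ 0). Then L_Sθ is closed, i.e., d(L_Sθ) = 0, if and only if the following five conditions hold: (H1) (d_Jθ)∧dt = 0; (H2) (d_hθ)∧dt = 0; (H3) (d_Φθ)∧dt = 0; (H4) (∇dθ)∧dt = 0, where ∇dθ := L_S(dθ) − i_Ψ(dθ); and (DS) the 1-form i_Sdθ is a dual symmetry of S, i.e., L_S(i_Sdθ) = 0. -/

import Mathlib

noncomputable section

/-- The local model `E = ℝ × (Fin n → ℝ) × (Fin n → ℝ)` of the first jet bundle `J¹π`,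
with coordinates `(t, xⁱ, yⁱ)`.  Tangent vectors at a point are identified with
elements of `E n` itself. -/
abbrev E (n : ℕ) : Type := ℝ × (Fin n → ℝ) × (Fin n → ℝ)

variable {n : ℕ}

/-- A map between normed spaces is `C^∞`-smooth. -/
def Cinf {α β : Type*} [NormedAddCommGroup α] [NormedSpace ℝ α]
    [NormedAddCommGroup β] [NormedSpace ℝ β] (f : α → β) : Prop :=
  ContDiff ℝ (⊤ : ℕ∞) f

/-- A tangent vector having only a `y`-component. -/
def ypart (w : Fin n → ℝ) : E n := (0, 0, w)

/-- The coordinate vector `∂/∂yⁱ`. -/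
def pdy (i : Fin n) : E n := ypart (Pi.single i 1)

/-- The coordinate vector `∂/∂xⁱ`. -/
def pdx (i : Fin n) : E n := (0, Pi.single i 1, 0)

/-- Action of a vector field `X` on a function `f`: `X(f)(p) = df_p(X(p))`. -/
def vfd (X : E n → E n) (f : E n → ℝ) : E n → ℝ := fun p => fderiv ℝ f p (X p)

/-- Lie bracket of vector fields on `E n`. -/
def lieb (X Y : E n → E n) : E n → E n :=
  fun p => fderiv ℝ Y p (X p) - fderiv ℝ X p (Y p)

/-- The semispray `S = ∂/∂t + Σ yⁱ ∂/∂xⁱ − 2 Σ Gⁱ ∂/∂yⁱ` associated to `G`. -/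
def Ssp (G : E n → Fin n → ℝ) : E n → E n := fun p => (1, p.2.2, fun i => -(2 * G p i))

/-- Nonlinear connection coefficients `Nⁱⱼ = ∂Gⁱ/∂yʲ`. -/
def Nc (G : E n → Fin n → ℝ) (i j : Fin n) : E n → ℝ :=
  fun p => fderiv ℝ (fun q => G q i) p (pdy j)

/-- `Nⁱ₀ = 2Gⁱ − Σⱼ Nⁱⱼ yʲ`. -/
def N0c (G : E n → Fin n → ℝ) (i : Fin n) : E n → ℝ :=
  fun p => 2 * G p i - ∑ j, Nc G i j p * p.2.2 j

/-- The horizontal vector field `δ/δxⁱ = ∂/∂xⁱ − Σⱼ Nʲᵢ ∂/∂yʲ`. -/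
def ddx (G : E n → Fin n → ℝ) (i : Fin n) : E n → E n :=
  fun p => (0, Pi.single i 1, fun j => -(Nc G j i p))

/-- The contact 1-form `δxⁱ = dxⁱ − yⁱ dt`. -/
def dxi (i : Fin n) : E n → E n → ℝ := fun p w => w.2.1 i - p.2.2 i * w.1

/-- The 1-form `δyⁱ = dyⁱ + Σⱼ Nⁱⱼ dxʲ + Nⁱ₀ dt`. -/
def dyi (G : E n → Fin n → ℝ) (i : Fin n) : E n → E n → ℝ :=
  fun p w => w.2.2 i + (∑ j, Nc G i j p * w.2.1 j) + N0c G i p * w.1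

/-- The vertical endomorphism `J = Σᵢ ∂/∂yⁱ ⊗ δxⁱ`. -/
def Jv : E n → E n → E n := fun p w => ypart (fun i => dxi i p w)

/-- The horizontal projector `h = S ⊗ dt + Σᵢ δ/δxⁱ ⊗ δxⁱ`. -/
def hv (G : E n → Fin n → ℝ) : E n → E n → E n :=
  fun p w => w.1 • Ssp G p + ∑ i, dxi i p w • ddx G i p

/-- Jacobi endomorphism components `Rⁱⱼ = 2 ∂Gⁱ/∂xʲ − Σₖ Nⁱₖ Nᵏⱼ − S(Nⁱⱼ)`. -/
def Rjac (G : E n → Fin n → ℝ) (i j : Fin n) : E n → ℝ := fun p =>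
  2 * fderiv ℝ (fun q => G q i) p (pdx j) - (∑ k, Nc G i k p * Nc G k j p)
    - vfd (Ssp G) (Nc G i j) p

/-- Curvature components `Rⁱⱼₖ = (δ/δxᵏ)(Nⁱⱼ) − (δ/δxʲ)(Nⁱₖ)`. -/
def Rcur (G : E n → Fin n → ℝ) (i j k : Fin n) : E n → ℝ := fun p =>
  fderiv ℝ (Nc G i j) p (ddx G k p) - fderiv ℝ (Nc G i k) p (ddx G j p)

/-- The Jacobi endomorphism `Φ = Σᵢⱼ Rʲᵢ ∂/∂yʲ ⊗ δxⁱ`. -/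
def Phi (G : E n → Fin n → ℝ) : E n → E n → E n :=
  fun p w => ypart (fun j => ∑ i, Rjac G j i p * dxi i p w)

/-- The tensor `Ψ = Σᵢ δ/δxⁱ ⊗ δyⁱ − Σᵢⱼ Rʲᵢ ∂/∂yʲ ⊗ δxⁱ`. -/
def Psi (G : E n → Fin n → ℝ) : E n → E n → E n :=
  fun p w => (∑ i, dyi G i p w • ddx G i p) - Phi G p w

/-- Lie derivative of a 1-form `θ` along `X`, evaluated on a vector field `Y`:
`(L_Xθ)(Y) = X(θ(Y)) − θ([X,Y])`. -/
def lieD (X : E n → E n) (θ : E n → E n → ℝ) (Y : E n → E n) : E n → ℝ :=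
  fun p => fderiv ℝ (fun q => θ q (Y q)) p (X p) - θ p (lieb X Y p)

/-- Exterior derivative of a 1-form: `dθ(X,Y) = X(θ(Y)) − Y(θ(X)) − θ([X,Y])`. -/
def extD (θ : E n → E n → ℝ) (X Y : E n → E n) : E n → ℝ :=
  fun p => fderiv ℝ (fun q => θ q (Y q)) p (X p) - fderiv ℝ (fun q => θ q (X q)) p (Y p)
    - θ p (lieb X Y p)

/-- Exterior derivative of a 1-form given as an operator on vector fields. -/
def extDop (α : (E n → E n) → E n → ℝ) (X Y : E n → E n) : E n → ℝ :=
  fun p => fderiv ℝ (α Y) p (X p) - fderiv ℝ (α X) p (Y p) - α (lieb X Y) p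

/-- The semi-basic 1-form `θ₀ dt + Σᵢ θᵢ δxⁱ`. -/
def sbform (θ0 : E n → ℝ) (θc : Fin n → E n → ℝ) : E n → E n → ℝ :=
  fun p w => θ0 p * w.1 + ∑ i, θc i p * dxi i p w

/-- `d_Jθ(X,Y) = dθ(JX,Y) + dθ(X,JY)` for a semi-basic 1-form `θ`. -/
def dJf (θ : E n → E n → ℝ) (X Y : E n → E n) : E n → ℝ :=
  fun p => extD θ (fun q => Jv q (X q)) Y p + extD θ X (fun q => Jv q (Y q)) p

/-- `d_hθ(X,Y) = dθ(hX,Y) + dθ(X,hY) − dθ(X,Y)` for a semi-basic 1-form `θ`. -/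
def dhf (G : E n → Fin n → ℝ) (θ : E n → E n → ℝ) (X Y : E n → E n) : E n → ℝ :=
  fun p => extD θ (fun q => hv G q (X q)) Y p + extD θ X (fun q => hv G q (Y q)) p
    - extD θ X Y p

/-- `d_Φθ(X,Y) = dθ(ΦX,Y) + dθ(X,ΦY)` for a semi-basic 1-form `θ`. -/
def dPhif (G : E n → Fin n → ℝ) (θ : E n → E n → ℝ) (X Y : E n → E n) : E n → ℝ :=
  fun p => extD θ (fun q => Phi G q (X q)) Y p + extD θ X (fun q => Phi G q (Y q)) p

/-- Lie derivative of the 2-form `dθ` along a vector field `SS`: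
`(L_S dθ)(X,Y) = S(dθ(X,Y)) − dθ([S,X],Y) − dθ(X,[S,Y])`. -/
def lieD2 (SS : E n → E n) (θ : E n → E n → ℝ) (X Y : E n → E n) : E n → ℝ :=
  fun p => fderiv ℝ (extD θ X Y) p (SS p) - extD θ (lieb SS X) Y p - extD θ X (lieb SS Y) p

/-- `∇dθ = L_S(dθ) − i_Ψ(dθ)`. -/
def nabD (G : E n → Fin n → ℝ) (θ : E n → E n → ℝ) (X Y : E n → E n) : E n → ℝ :=
  fun p => lieD2 (Ssp G) θ X Y p
    - (extD θ (fun q => Psi G q (X q)) Y p + extD θ X (fun q => Psi G q (Y q)) p)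

/-- The dynamical covariant derivative of an `n`-tuple of functions:
`(∇f)ᵢ = S(fᵢ) − Σⱼ Nʲᵢ fⱼ`. -/
def covd (G : E n → Fin n → ℝ) (f : Fin n → E n → ℝ) : Fin n → E n → ℝ :=
  fun i p => vfd (Ssp G) (f i) p - ∑ j, Nc G j i p * f j p


/- ===================== Auxiliary development ===================== -/

section Aux

open ContinuousLinearMap

variable {n : ℕ}

lemma top1 : (1 : WithTop ℕ∞) ≤ ((⊤:ℕ∞) : WithTop ℕ∞) := by
  rw [show (1 : WithTop ℕ∞) = ((1:ℕ∞) : WithTop ℕ∞) by rfl]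
  exact WithTop.coe_le_coe.mpr le_top

lemma top2 : (2 : WithTop ℕ∞) ≤ ((⊤:ℕ∞) : WithTop ℕ∞) := by
  rw [show (2 : WithTop ℕ∞) = ((2:ℕ∞) : WithTop ℕ∞) by rfl]
  exact WithTop.coe_le_coe.mpr le_top

lemma Cinf.diffAt {α β : Type*} [NormedAddCommGroup α] [NormedSpace ℝ α]
    [NormedAddCommGroup β] [NormedSpace ℝ β] {f : α → β} (hf : Cinf f) {p : α} :
    DifferentiableAt ℝ f p := (hf.differentiable (by simp)).differentiableAt

lemma Cinf.fderivR {α β : Type*} [NormedAddCommGroup α] [NormedSpace ℝ α]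
    [NormedAddCommGroup β] [NormedSpace ℝ β] {f : α → β} (hf : Cinf f) :
    Cinf (fderiv ℝ f) := hf.fderiv_right (by simp)

/-- coordinate projections as continuous linear maps -/
def cT : E n →L[ℝ] ℝ := ContinuousLinearMap.fst ℝ ℝ ((Fin n → ℝ) × (Fin n → ℝ))

def cXf : E n →L[ℝ] (Fin n → ℝ) :=
  (ContinuousLinearMap.fst ℝ (Fin n → ℝ) (Fin n → ℝ)).comp
    (ContinuousLinearMap.snd ℝ ℝ ((Fin n → ℝ) × (Fin n → ℝ)))

def cYf : E n →L[ℝ] (Fin n → ℝ) :=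
  (ContinuousLinearMap.snd ℝ (Fin n → ℝ) (Fin n → ℝ)).comp
    (ContinuousLinearMap.snd ℝ ℝ ((Fin n → ℝ) × (Fin n → ℝ)))

def cXi (i : Fin n) : E n →L[ℝ] ℝ := (ContinuousLinearMap.proj i).comp cXf
def cYi (i : Fin n) : E n →L[ℝ] ℝ := (ContinuousLinearMap.proj i).comp cYf

@[simp] lemma cT_apply (w : E n) : cT w = w.1 := rfl
@[simp] lemma cXf_apply (w : E n) : cXf w = w.2.1 := rfl
@[simp] lemma cYf_apply (w : E n) : cYf w = w.2.2 := rfl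
@[simp] lemma cXi_apply (i : Fin n) (w : E n) : cXi i w = w.2.1 i := rfl
@[simp] lemma cYi_apply (i : Fin n) (w : E n) : cYi i w = w.2.2 i := rfl

variable (θ0 : E n → ℝ) (θc : Fin n → E n → ℝ) (G : E n → Fin n → ℝ)

/-- The semibasic form as a continuous-linear-map-valued function. -/
def Th : E n → E n →L[ℝ] ℝ := fun q =>
  θ0 q • cT + (∑ i, θc i q • cXi i) - ∑ i, (θc i q * q.2.2 i) • cT

lemma sbform_eq (q w : E n) : sbform θ0 θc q w = Th θ0 θc q w := by
  simp only [sbform, Th, dxi, ContinuousLinearMap.sub_apply, ContinuousLinearMap.add_apply,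
    ContinuousLinearMap.coe_sum', Finset.sum_apply, ContinuousLinearMap.coe_smul',
    Pi.smul_apply, smul_eq_mul, cT_apply, cXi_apply]
  have h : ∀ i ∈ Finset.univ, θc i q * (w.2.1 i - q.2.2 i * w.1)
      = θc i q * w.2.1 i - θc i q * q.2.2 i * w.1 := fun i _ => by ring
  rw [Finset.sum_congr rfl h, Finset.sum_sub_distrib, add_sub_assoc]

lemma cinf_Th (h0 : Cinf θ0) (hc : ∀ i, Cinf (θc i)) : Cinf (Th θ0 θc) := by
  refine ContDiff.sub (ContDiff.add ?_ ?_) ?_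
  · exact h0.smul contDiff_const
  · exact ContDiff.sum fun i _ => (hc i).smul contDiff_const
  · exact ContDiff.sum fun i _ => (((hc i).mul (cYi i).contDiff).smul contDiff_const)

lemma cinf_comp_pi (hG : Cinf G) (i : Fin n) : Cinf (fun q => G q i) := contDiff_pi.mp hG i

lemma cinf_Ssp (hG : Cinf G) : Cinf (Ssp G) := by
  refine ContDiff.prodMk contDiff_const (ContDiff.prodMk cYf.contDiff ?_)
  exact contDiff_pi.mpr fun i => (contDiff_const.mul (cinf_comp_pi G hG i)).neg

/-- generic chain rule for a CLM-valued function applied to a vector field -/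
lemma fderiv_clm_comp_apply {H : Type*} [NormedAddCommGroup H] [NormedSpace ℝ H]
    {c : E n → E n →L[ℝ] H} {Y : E n → E n} {p : E n}
    (hcd : DifferentiableAt ℝ c p) (hYd : DifferentiableAt ℝ Y p) (u : E n) :
    fderiv ℝ (fun q => c q (Y q)) p u = fderiv ℝ c p u (Y p) + c p (fderiv ℝ Y p u) := by
  rw [fderiv_clm_apply hcd hYd]
  simp only [ContinuousLinearMap.add_apply, ContinuousLinearMap.comp_apply,
    ContinuousLinearMap.flip_apply]
  try rw [add_comm]

/-- first derivative of the CLM-valued 1-form -/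
def DT : E n → E n →L[ℝ] E n →L[ℝ] ℝ := fderiv ℝ (Th θ0 θc)

/-- the exterior derivative `dθ` as an explicit bilinear expression -/
def Om (p u v : E n) : ℝ := DT θ0 θc p u v - DT θ0 θc p v u

lemma Om_anti (p u v : E n) : Om θ0 θc p u v = - Om θ0 θc p v u := by
  simp only [Om]; ring

lemma cinf_DT (h0 : Cinf θ0) (hc : ∀ i, Cinf (θc i)) : Cinf (DT θ0 θc) :=
  (cinf_Th θ0 θc h0 hc).fderivR

lemma extD_eq (h0 : Cinf θ0) (hc : ∀ i, Cinf (θc i)) {X Y : E n → E n}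
    (hX : Cinf X) (hY : Cinf Y) (p : E n) :
    extD (sbform θ0 θc) X Y p = Om θ0 θc p (X p) (Y p) := by
  have hTh := cinf_Th θ0 θc h0 hc
  have e : ∀ Z : E n → E n, (fun q => sbform θ0 θc q (Z q)) = fun q => Th θ0 θc q (Z q) :=
    fun Z => funext fun q => sbform_eq θ0 θc q (Z q)
  show fderiv ℝ (fun q => sbform θ0 θc q (Y q)) p (X p)
      - fderiv ℝ (fun q => sbform θ0 θc q (X q)) p (Y p)
      - sbform θ0 θc p (lieb X Y p) = _
  rw [e X, e Y, sbform_eq,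
    fderiv_clm_comp_apply hTh.diffAt hY.diffAt,
    fderiv_clm_comp_apply hTh.diffAt hX.diffAt]
  show _ - _ - Th θ0 θc p (fderiv ℝ Y p (X p) - fderiv ℝ X p (Y p)) = _
  rw [map_sub]
  simp only [Om, DT]
  ring

/-- derivative of the semispray -/
def SD : E n → E n →L[ℝ] E n := fderiv ℝ (Ssp G)

lemma hasFDerivAt_Ssp (hG : Cinf G) (p : E n) :
    HasFDerivAt (Ssp G)
      ((0 : E n →L[ℝ] ℝ).prod ((cYf).prod
        (ContinuousLinearMap.pi fun i => -((2:ℝ) • fderiv ℝ (fun q => G q i) p)))) p := by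
  refine HasFDerivAt.prodMk ?_ (HasFDerivAt.prodMk ?_ ?_)
  · exact hasFDerivAt_const 1 p
  · exact cYf.hasFDerivAt
  · refine hasFDerivAt_pi.2 fun i => ?_
    have h := ((cinf_comp_pi G hG i).diffAt (p := p)).hasFDerivAt.const_mul (2:ℝ)
    exact h.neg

lemma SD_apply (hG : Cinf G) (p u : E n) :
    SD G p u = (0, u.2.2, fun i => -(2 * fderiv ℝ (fun q => G q i) p u)) := by
  rw [show SD G p = _ from (hasFDerivAt_Ssp G hG p).fderiv]
  refine Prod.ext rfl (Prod.ext rfl (funext fun i => ?_))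
  simp

lemma cinf_SD (hG : Cinf G) : Cinf (SD G) := (cinf_Ssp G hG).fderivR

/-- `L_S θ` as a CLM-valued 1-form -/
def Mu : E n → E n →L[ℝ] ℝ := fun p => DT θ0 θc p (Ssp G p) + (Th θ0 θc p).comp (SD G p)

lemma cinf_Mu (h0 : Cinf θ0) (hc : ∀ i, Cinf (θc i)) (hG : Cinf G) :
    Cinf (Mu θ0 θc G) :=
  ContDiff.add ((cinf_DT θ0 θc h0 hc).clm_apply (cinf_Ssp G hG))
    ((cinf_Th θ0 θc h0 hc).clm_comp (cinf_SD G hG))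

lemma lieD_eq (h0 : Cinf θ0) (hc : ∀ i, Cinf (θc i)) (hG : Cinf G)
    {Y : E n → E n} (hY : Cinf Y) (p : E n) :
    lieD (Ssp G) (sbform θ0 θc) Y p = Mu θ0 θc G p (Y p) := by
  have hTh := cinf_Th θ0 θc h0 hc
  show fderiv ℝ (fun q => sbform θ0 θc q (Y q)) p (Ssp G p)
      - sbform θ0 θc p (lieb (Ssp G) Y p) = _
  rw [show (fun q => sbform θ0 θc q (Y q)) = fun q => Th θ0 θc q (Y q) from
      funext fun q => sbform_eq θ0 θc q (Y q),
    sbform_eq, fderiv_clm_comp_apply hTh.diffAt hY.diffAt]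
  show _ + _ - Th θ0 θc p (fderiv ℝ Y p (Ssp G p) - fderiv ℝ (Ssp G) p (Y p)) = _
  rw [map_sub]
  simp only [Mu, DT, SD, ContinuousLinearMap.add_apply, ContinuousLinearMap.comp_apply]
  ring

lemma cinf_lieb {X Y : E n → E n} (hX : Cinf X) (hY : Cinf Y) : Cinf (lieb X Y) :=
  ContDiff.sub (hY.fderivR.clm_apply hX) (hX.fderivR.clm_apply hY)

lemma extDop_eq (h0 : Cinf θ0) (hc : ∀ i, Cinf (θc i)) (hG : Cinf G)
    {X Y : E n → E n} (hX : Cinf X) (hY : Cinf Y) (p : E n) :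
    extDop (lieD (Ssp G) (sbform θ0 θc)) X Y p
      = fderiv ℝ (Mu θ0 θc G) p (X p) (Y p) - fderiv ℝ (Mu θ0 θc G) p (Y p) (X p) := by
  have hMu := cinf_Mu θ0 θc G h0 hc hG
  show fderiv ℝ (lieD (Ssp G) (sbform θ0 θc) Y) p (X p)
      - fderiv ℝ (lieD (Ssp G) (sbform θ0 θc) X) p (Y p)
      - lieD (Ssp G) (sbform θ0 θc) (lieb X Y) p = _
  rw [show lieD (Ssp G) (sbform θ0 θc) Y = fun q => Mu θ0 θc G q (Y q) from
      funext fun q => lieD_eq θ0 θc G h0 hc hG hY q,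
    show lieD (Ssp G) (sbform θ0 θc) X = fun q => Mu θ0 θc G q (X q) from
      funext fun q => lieD_eq θ0 θc G h0 hc hG hX q,
    lieD_eq θ0 θc G h0 hc hG (cinf_lieb hX hY) p,
    fderiv_clm_comp_apply hMu.diffAt hY.diffAt,
    fderiv_clm_comp_apply hMu.diffAt hX.diffAt]
  show _ - _ - Mu θ0 θc G p (fderiv ℝ Y p (X p) - fderiv ℝ X p (Y p)) = _
  rw [map_sub]
  ring

/-- `L_S dθ` as an explicit tensorial expression -/
def LOm (p u v : E n) : ℝ :=
  fderiv ℝ (DT θ0 θc) p (Ssp G p) u v - fderiv ℝ (DT θ0 θc) p (Ssp G p) v u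
    + Om θ0 θc p (SD G p u) v + Om θ0 θc p u (SD G p v)

lemma DDT_symm (h0 : Cinf θ0) (hc : ∀ i, Cinf (θc i)) (p u w : E n) :
    fderiv ℝ (DT θ0 θc) p u w = fderiv ℝ (DT θ0 θc) p w u :=
  ((cinf_Th θ0 θc h0 hc).contDiffAt.isSymmSndFDerivAt (by rw [minSmoothness_of_isRCLikeNormedField]; exact top2)) u w

lemma D2S_symm (hG : Cinf G) (p u v : E n) :
    fderiv ℝ (SD G) p u v = fderiv ℝ (SD G) p v u :=
  ((cinf_Ssp G hG).contDiffAt.isSymmSndFDerivAt (by rw [minSmoothness_of_isRCLikeNormedField]; exact top2)) u v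

lemma LOm_anti (p u v : E n) : LOm θ0 θc G p u v = - LOm θ0 θc G p v u := by
  simp only [LOm, Om]; ring

lemma fderiv_Mu_antisym (h0 : Cinf θ0) (hc : ∀ i, Cinf (θc i)) (hG : Cinf G) (p u v : E n) :
    fderiv ℝ (Mu θ0 θc G) p u v - fderiv ℝ (Mu θ0 θc G) p v u = LOm θ0 θc G p u v := by
  have hTh := cinf_Th θ0 θc h0 hc
  have hDT := cinf_DT θ0 θc h0 hc
  have hS := cinf_Ssp G hG
  have hSD := cinf_SD G hG
  have hA : ∀ u : E n, fderiv ℝ (fun q => DT θ0 θc q (Ssp G q)) p u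
      = fderiv ℝ (DT θ0 θc) p u (Ssp G p) + DT θ0 θc p (SD G p u) :=
    fun u => fderiv_clm_comp_apply hDT.diffAt hS.diffAt u
  have hB : ∀ u : E n, fderiv ℝ (fun q => (Th θ0 θc q).comp (SD G q)) p u
      = (Th θ0 θc p).comp (fderiv ℝ (SD G) p u) + (fderiv ℝ (Th θ0 θc) p u).comp (SD G p) := by
    intro u
    rw [fderiv_clm_comp hTh.diffAt hSD.diffAt]
    simp only [ContinuousLinearMap.add_apply, ContinuousLinearMap.comp_apply,
      ContinuousLinearMap.flip_apply, ContinuousLinearMap.compL_apply]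
  have hMu : ∀ u : E n, fderiv ℝ (Mu θ0 θc G) p u
      = fderiv ℝ (DT θ0 θc) p u (Ssp G p) + DT θ0 θc p (SD G p u)
        + ((Th θ0 θc p).comp (fderiv ℝ (SD G) p u) + (DT θ0 θc p u).comp (SD G p)) := by
    intro u
    have : Mu θ0 θc G = fun q => (fun q => DT θ0 θc q (Ssp G q)) q
        + (fun q => (Th θ0 θc q).comp (SD G q)) q := rfl
    rw [this, fderiv_fun_add (Cinf.diffAt (hDT.clm_apply hS)) (Cinf.diffAt (hTh.clm_comp hSD))]
    simp only [ContinuousLinearMap.add_apply]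
    rw [hA u, hB u]
    rfl
  rw [show ∀ w, fderiv ℝ (Mu θ0 θc G) p u w = _ from fun w => by rw [hMu u],
      show ∀ w, fderiv ℝ (Mu θ0 θc G) p v w = _ from fun w => by rw [hMu v]]
  simp only [ContinuousLinearMap.add_apply, ContinuousLinearMap.comp_apply]
  rw [DDT_symm θ0 θc h0 hc p u (Ssp G p), DDT_symm θ0 θc h0 hc p v (Ssp G p),
    D2S_symm G hG p u v]
  simp only [LOm, Om, DT]
  ring

/- ---- smoothness of the various geometric data ---- -/

lemma cinf_c1 {X : E n → E n} (hX : Cinf X) : Cinf (fun q => (X q).1) :=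
  cT.contDiff.comp hX
lemma cinf_cx {X : E n → E n} (hX : Cinf X) (i : Fin n) : Cinf (fun q => (X q).2.1 i) :=
  (cXi i).contDiff.comp hX
lemma cinf_cy {X : E n → E n} (hX : Cinf X) (i : Fin n) : Cinf (fun q => (X q).2.2 i) :=
  (cYi i).contDiff.comp hX

lemma cinf_dxiX {X : E n → E n} (hX : Cinf X) (i : Fin n) :
    Cinf (fun q => dxi i q (X q)) :=
  (cinf_cx hX i).sub ((cYi i).contDiff.mul (cinf_c1 hX))

lemma cinf_Nc (hG : Cinf G) (i j : Fin n) : Cinf (Nc G i j) :=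
  (cinf_comp_pi G hG i).fderivR.clm_apply contDiff_const

lemma cinf_N0c (hG : Cinf G) (i : Fin n) : Cinf (N0c G i) :=
  (contDiff_const.mul (cinf_comp_pi G hG i)).sub
    (ContDiff.sum fun j _ => (cinf_Nc G hG i j).mul (cYi j).contDiff)

lemma cinf_ddx (hG : Cinf G) (i : Fin n) : Cinf (ddx G i) :=
  contDiff_const.prodMk (contDiff_const.prodMk
    (contDiff_pi.mpr fun j => (cinf_Nc G hG j i).neg))

lemma cinf_Rjac (hG : Cinf G) (i j : Fin n) : Cinf (Rjac G i j) := by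
  refine ContDiff.sub (ContDiff.sub ?_ ?_) ?_
  · exact contDiff_const.mul ((cinf_comp_pi G hG i).fderivR.clm_apply contDiff_const)
  · exact ContDiff.sum fun k _ => (cinf_Nc G hG i k).mul (cinf_Nc G hG k j)
  · exact (cinf_Nc G hG i j).fderivR.clm_apply (cinf_Ssp G hG)

lemma cinf_dyiX (hG : Cinf G) {X : E n → E n} (hX : Cinf X) (i : Fin n) :
    Cinf (fun q => dyi G i q (X q)) := by
  refine ContDiff.add (ContDiff.add (cinf_cy hX i) ?_) ?_
  · exact ContDiff.sum fun j _ => (cinf_Nc G hG i j).mul (cinf_cx hX j)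
  · exact (cinf_N0c G hG i).mul (cinf_c1 hX)

lemma cinf_Jcomp {X : E n → E n} (hX : Cinf X) : Cinf (fun q => Jv q (X q)) := by
  have e : (fun q => Jv q (X q))
      = fun q => ((0:ℝ), (0 : Fin n → ℝ), fun i => (X q).2.1 i - q.2.2 i * (X q).1) := rfl
  rw [e]
  exact contDiff_const.prodMk (contDiff_const.prodMk (contDiff_pi.mpr fun i =>
    ((cXi i).contDiff.comp hX).sub ((cYi i).contDiff.mul (cT.contDiff.comp hX))))

lemma cinf_hcomp (hG : Cinf G) {X : E n → E n} (hX : Cinf X) :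
    Cinf (fun q => hv G q (X q)) := by
  have e : (fun q => hv G q (X q))
      = fun q => (X q).1 • Ssp G q + ∑ i, dxi i q (X q) • ddx G i q := rfl
  rw [e]
  exact ((cinf_c1 hX).smul (cinf_Ssp G hG)).add
    (ContDiff.sum fun i _ => (cinf_dxiX hX i).smul (cinf_ddx G hG i))

lemma cinf_Phicomp (hG : Cinf G) {X : E n → E n} (hX : Cinf X) :
    Cinf (fun q => Phi G q (X q)) := by
  have e : (fun q => Phi G q (X q))
      = fun q => ((0:ℝ), (0 : Fin n → ℝ), fun j => ∑ i, Rjac G j i q * dxi i q (X q)) := rfl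
  rw [e]
  exact contDiff_const.prodMk (contDiff_const.prodMk (contDiff_pi.mpr fun j =>
    ContDiff.sum fun i _ => (cinf_Rjac G hG j i).mul (cinf_dxiX hX i)))

lemma cinf_Psicomp (hG : Cinf G) {X : E n → E n} (hX : Cinf X) :
    Cinf (fun q => Psi G q (X q)) := by
  have e : (fun q => Psi G q (X q))
      = fun q => (∑ i, dyi G i q (X q) • ddx G i q) - Phi G q (X q) := rfl
  rw [e]
  exact (ContDiff.sum fun i _ => (cinf_dyiX G hG hX i).smul (cinf_ddx G hG i)).sub
    (cinf_Phicomp G hG hX)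

/- ---- linearity of Om in each slot ---- -/

lemma Om_sub_left (p u u' v : E n) :
    Om θ0 θc p (u - u') v = Om θ0 θc p u v - Om θ0 θc p u' v := by
  simp only [Om, map_sub, ContinuousLinearMap.sub_apply]; ring

lemma Om_sub_right (p u v v' : E n) :
    Om θ0 θc p u (v - v') = Om θ0 θc p u v - Om θ0 θc p u v' := by
  simp only [Om, map_sub, ContinuousLinearMap.sub_apply]; ring

lemma Om_add_left (p u u' v : E n) :
    Om θ0 θc p (u + u') v = Om θ0 θc p u v + Om θ0 θc p u' v := by
  simp only [Om, map_add, ContinuousLinearMap.add_apply]; ring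

lemma Om_add_right (p u v v' : E n) :
    Om θ0 θc p u (v + v') = Om θ0 θc p u v + Om θ0 θc p u v' := by
  simp only [Om, map_add, ContinuousLinearMap.add_apply]; ring

lemma Om_smul_left (p : E n) (c : ℝ) (u v : E n) :
    Om θ0 θc p (c • u) v = c * Om θ0 θc p u v := by
  simp only [Om, map_smul, ContinuousLinearMap.smul_apply, smul_eq_mul]; ring

lemma Om_smul_right (p : E n) (c : ℝ) (u v : E n) :
    Om θ0 θc p u (c • v) = c * Om θ0 θc p u v := by
  simp only [Om, map_smul, ContinuousLinearMap.smul_apply, smul_eq_mul]; ring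

/- ---- tensoriality of the operators ---- -/

lemma dJf_eq (h0 : Cinf θ0) (hc : ∀ i, Cinf (θc i)) {X Y : E n → E n}
    (hX : Cinf X) (hY : Cinf Y) (p : E n) :
    dJf (sbform θ0 θc) X Y p
      = Om θ0 θc p (Jv p (X p)) (Y p) + Om θ0 θc p (X p) (Jv p (Y p)) := by
  show extD (sbform θ0 θc) (fun q => Jv q (X q)) Y p
      + extD (sbform θ0 θc) X (fun q => Jv q (Y q)) p = _
  rw [extD_eq θ0 θc h0 hc (cinf_Jcomp hX) hY, extD_eq θ0 θc h0 hc hX (cinf_Jcomp hY)]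

lemma dhf_eq (h0 : Cinf θ0) (hc : ∀ i, Cinf (θc i)) (hG : Cinf G) {X Y : E n → E n}
    (hX : Cinf X) (hY : Cinf Y) (p : E n) :
    dhf G (sbform θ0 θc) X Y p
      = Om θ0 θc p (hv G p (X p)) (Y p) + Om θ0 θc p (X p) (hv G p (Y p))
        - Om θ0 θc p (X p) (Y p) := by
  show extD (sbform θ0 θc) (fun q => hv G q (X q)) Y p
      + extD (sbform θ0 θc) X (fun q => hv G q (Y q)) p - extD (sbform θ0 θc) X Y p = _
  rw [extD_eq θ0 θc h0 hc (cinf_hcomp G hG hX) hY,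
    extD_eq θ0 θc h0 hc hX (cinf_hcomp G hG hY), extD_eq θ0 θc h0 hc hX hY]

lemma dPhif_eq (h0 : Cinf θ0) (hc : ∀ i, Cinf (θc i)) (hG : Cinf G) {X Y : E n → E n}
    (hX : Cinf X) (hY : Cinf Y) (p : E n) :
    dPhif G (sbform θ0 θc) X Y p
      = Om θ0 θc p (Phi G p (X p)) (Y p) + Om θ0 θc p (X p) (Phi G p (Y p)) := by
  show extD (sbform θ0 θc) (fun q => Phi G q (X q)) Y p
      + extD (sbform θ0 θc) X (fun q => Phi G q (Y q)) p = _
  rw [extD_eq θ0 θc h0 hc (cinf_Phicomp G hG hX) hY,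
    extD_eq θ0 θc h0 hc hX (cinf_Phicomp G hG hY)]

lemma fderiv_OmXY (h0 : Cinf θ0) (hc : ∀ i, Cinf (θc i)) {X Y : E n → E n}
    (hX : Cinf X) (hY : Cinf Y) (p w : E n) :
    fderiv ℝ (fun q => Om θ0 θc q (X q) (Y q)) p w
      = fderiv ℝ (DT θ0 θc) p w (X p) (Y p) - fderiv ℝ (DT θ0 θc) p w (Y p) (X p)
        + Om θ0 θc p (fderiv ℝ X p w) (Y p) + Om θ0 θc p (X p) (fderiv ℝ Y p w) := by
  have hDT := cinf_DT θ0 θc h0 hc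
  have hcX : Cinf (fun q => DT θ0 θc q (X q)) := hDT.clm_apply hX
  have hcY : Cinf (fun q => DT θ0 θc q (Y q)) := hDT.clm_apply hY
  have e : (fun q => Om θ0 θc q (X q) (Y q))
      = fun q => (fun r => DT θ0 θc r (X r)) q (Y q) - (fun r => DT θ0 θc r (Y r)) q (X q) := rfl
  rw [e, fderiv_fun_sub (Cinf.diffAt (hcX.clm_apply hY)) (Cinf.diffAt (hcY.clm_apply hX)),
    ContinuousLinearMap.sub_apply,
    fderiv_clm_comp_apply (Cinf.diffAt hcX) (Cinf.diffAt hY) w,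
    fderiv_clm_comp_apply (Cinf.diffAt hcY) (Cinf.diffAt hX) w,
    fderiv_clm_comp_apply (Cinf.diffAt hDT) (Cinf.diffAt hX) w,
    fderiv_clm_comp_apply (Cinf.diffAt hDT) (Cinf.diffAt hY) w]
  simp only [ContinuousLinearMap.add_apply, Om]
  ring

lemma lieD2_eq (h0 : Cinf θ0) (hc : ∀ i, Cinf (θc i)) (hG : Cinf G) {X Y : E n → E n}
    (hX : Cinf X) (hY : Cinf Y) (p : E n) :
    lieD2 (Ssp G) (sbform θ0 θc) X Y p = LOm θ0 θc G p (X p) (Y p) := by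
  have hS := cinf_Ssp G hG
  show fderiv ℝ (extD (sbform θ0 θc) X Y) p (Ssp G p)
      - extD (sbform θ0 θc) (lieb (Ssp G) X) Y p
      - extD (sbform θ0 θc) X (lieb (Ssp G) Y) p = _
  rw [show extD (sbform θ0 θc) X Y = fun q => Om θ0 θc q (X q) (Y q) from
      funext fun q => extD_eq θ0 θc h0 hc hX hY q,
    fderiv_OmXY θ0 θc h0 hc hX hY p (Ssp G p),
    extD_eq θ0 θc h0 hc (cinf_lieb hS hX) hY p,
    extD_eq θ0 θc h0 hc hX (cinf_lieb hS hY) p]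
  show _ - Om θ0 θc p (fderiv ℝ X p (Ssp G p) - fderiv ℝ (Ssp G) p (X p)) (Y p)
      - Om θ0 θc p (X p) (fderiv ℝ Y p (Ssp G p) - fderiv ℝ (Ssp G) p (Y p)) = _
  rw [Om_sub_left, Om_sub_right]
  simp only [LOm, SD]
  ring

lemma nabD_eq (h0 : Cinf θ0) (hc : ∀ i, Cinf (θc i)) (hG : Cinf G) {X Y : E n → E n}
    (hX : Cinf X) (hY : Cinf Y) (p : E n) :
    nabD G (sbform θ0 θc) X Y p
      = LOm θ0 θc G p (X p) (Y p)
        - (Om θ0 θc p (Psi G p (X p)) (Y p) + Om θ0 θc p (X p) (Psi G p (Y p))) := by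
  show lieD2 (Ssp G) (sbform θ0 θc) X Y p
      - (extD (sbform θ0 θc) (fun q => Psi G q (X q)) Y p
        + extD (sbform θ0 θc) X (fun q => Psi G q (Y q)) p) = _
  rw [lieD2_eq θ0 θc G h0 hc hG hX hY p,
    extD_eq θ0 θc h0 hc (cinf_Psicomp G hG hX) hY p,
    extD_eq θ0 θc h0 hc hX (cinf_Psicomp G hG hY) p]

lemma DSexpr_eq (h0 : Cinf θ0) (hc : ∀ i, Cinf (θc i)) (hG : Cinf G) {X : E n → E n}
    (hX : Cinf X) (p : E n) :
    fderiv ℝ (extD (sbform θ0 θc) (Ssp G) X) p (Ssp G p)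
      - extD (sbform θ0 θc) (Ssp G) (lieb (Ssp G) X) p
      = LOm θ0 θc G p (Ssp G p) (X p) := by
  have hS := cinf_Ssp G hG
  rw [show extD (sbform θ0 θc) (Ssp G) X = fun q => Om θ0 θc q (Ssp G q) (X q) from
      funext fun q => extD_eq θ0 θc h0 hc hS hX q,
    fderiv_OmXY θ0 θc h0 hc hS hX p (Ssp G p),
    extD_eq θ0 θc h0 hc hS (cinf_lieb hS hX) p]
  show _ - Om θ0 θc p (Ssp G p) (fderiv ℝ X p (Ssp G p) - fderiv ℝ (Ssp G) p (X p)) = _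
  rw [Om_sub_right]
  simp only [LOm, SD]
  ring

/- ---- explicit coordinate formulas ---- -/

@[simp] lemma pdx_1 (i : Fin n) : (pdx i).1 = 0 := rfl
@[simp] lemma pdx_21 (i : Fin n) : (pdx i).2.1 = Pi.single i 1 := rfl
@[simp] lemma pdx_22 (i : Fin n) : (pdx i).2.2 = 0 := rfl
@[simp] lemma pdy_1 (i : Fin n) : (pdy i).1 = 0 := rfl
@[simp] lemma pdy_21 (i : Fin n) : (pdy i).2.1 = 0 := rfl
@[simp] lemma pdy_22 (i : Fin n) : (pdy i).2.2 = Pi.single i 1 := rfl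
@[simp] lemma ypart_1 (c : Fin n → ℝ) : (ypart c).1 = 0 := rfl
@[simp] lemma ypart_21 (c : Fin n → ℝ) : (ypart c).2.1 = 0 := rfl
@[simp] lemma ypart_22 (c : Fin n → ℝ) : (ypart c).2.2 = c := rfl

lemma Th_apply (q w : E n) : Th θ0 θc q w
    = θ0 q * w.1 + (∑ i, θc i q * w.2.1 i) - ∑ i, θc i q * q.2.2 i * w.1 := by
  simp only [Th, ContinuousLinearMap.sub_apply, ContinuousLinearMap.add_apply,
    ContinuousLinearMap.coe_sum', Finset.sum_apply, ContinuousLinearMap.coe_smul',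
    Pi.smul_apply, smul_eq_mul, cT_apply, cXi_apply]

lemma DT_clm_apply_const (h0 : Cinf θ0) (hc : ∀ i, Cinf (θc i)) (p u v : E n) :
    fderiv ℝ (fun q => Th θ0 θc q v) p u = DT θ0 θc p u v := by
  have hTh := cinf_Th θ0 θc h0 hc
  rw [fderiv_clm_apply hTh.diffAt (differentiableAt_const v)]
  simp [DT]

lemma DT_apply (h0 : Cinf θ0) (hc : ∀ i, Cinf (θc i)) (p u v : E n) :
    DT θ0 θc p u v = fderiv ℝ θ0 p u * v.1 + (∑ i, fderiv ℝ (θc i) p u * v.2.1 i)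
      - ∑ i, (fderiv ℝ (θc i) p u * p.2.2 i + θc i p * u.2.2 i) * v.1 := by
  rw [← DT_clm_apply_const θ0 θc h0 hc p u v]
  have hyi : ∀ i : Fin n, DifferentiableAt ℝ (fun q : E n => q.2.2 i) p :=
    fun i => (cYi i).differentiableAt
  have hfyi : ∀ i : Fin n, fderiv ℝ (fun q : E n => q.2.2 i) p = cYi i :=
    fun i => (cYi i).fderiv
  have e : (fun q => Th θ0 θc q v) = fun q =>
      (θ0 q * v.1 + ∑ i, θc i q * v.2.1 i) - ∑ i, θc i q * q.2.2 i * v.1 :=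
    funext fun q => by rw [Th_apply]
  rw [e, fderiv_fun_sub (((h0.diffAt).mul_const v.1).fun_add (DifferentiableAt.fun_sum
      (fun i _ => ((hc i).diffAt).mul_const (v.2.1 i))))
      (DifferentiableAt.fun_sum fun i _ => (((hc i).diffAt).fun_mul (hyi i)).mul_const v.1),
    fderiv_fun_add ((h0.diffAt).mul_const v.1)
      (DifferentiableAt.fun_sum fun i _ => ((hc i).diffAt).mul_const (v.2.1 i)),
    fderiv_mul_const h0.diffAt,
    fderiv_fun_sum (fun i _ => ((hc i).diffAt).mul_const (v.2.1 i)),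
    fderiv_fun_sum (fun i _ => (((hc i).diffAt).fun_mul (hyi i)).mul_const v.1)]
  simp only [ContinuousLinearMap.sub_apply, ContinuousLinearMap.add_apply,
    ContinuousLinearMap.coe_sum', Finset.sum_apply, ContinuousLinearMap.coe_smul',
    Pi.smul_apply, smul_eq_mul]
  congr 1
  · congr 1
    · ring
    · exact Finset.sum_congr rfl fun i _ => by
        rw [fderiv_mul_const ((hc i).diffAt)]
        simp [smul_eq_mul]; ring
  · refine Finset.sum_congr rfl fun i _ => ?_
    rw [fderiv_mul_const (((hc i).diffAt).fun_mul (hyi i)),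
      fderiv_fun_mul ((hc i).diffAt) (hyi i), hfyi i]
    simp [smul_eq_mul]; ring

/- component function atoms -/
def gf (i j : Fin n) : E n → ℝ := fun p => fderiv ℝ (θc j) p (pdy i)
def axf (i j : Fin n) : E n → ℝ := fun p => fderiv ℝ (θc j) p (pdx i)
def Af (i j : Fin n) : E n → ℝ := fun p => axf θc i j p - axf θc j i p
def Gx (k i : Fin n) : E n → ℝ := fun p => fderiv ℝ (fun q => G q k) p (pdx i)

lemma Om_xx (h0 : Cinf θ0) (hc : ∀ i, Cinf (θc i)) (p : E n) (i j : Fin n) :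
    Om θ0 θc p (pdx i) (pdx j) = Af θc i j p := by
  simp only [Om, DT_apply θ0 θc h0 hc, Af, axf, pdx_1, pdx_21, pdx_22]
  simp [Pi.single_apply, mul_ite, Finset.sum_ite_eq', mul_comm]

lemma Om_xy (h0 : Cinf θ0) (hc : ∀ i, Cinf (θc i)) (p : E n) (i j : Fin n) :
    Om θ0 θc p (pdx i) (pdy j) = -(gf θc j i p) := by
  simp only [Om, DT_apply θ0 θc h0 hc, gf, pdx_1, pdx_21, pdx_22, pdy_1, pdy_21, pdy_22]
  simp [Pi.single_apply, mul_ite, Finset.sum_ite_eq', mul_comm]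

lemma Om_yx (h0 : Cinf θ0) (hc : ∀ i, Cinf (θc i)) (p : E n) (i j : Fin n) :
    Om θ0 θc p (pdy i) (pdx j) = gf θc i j p := by
  rw [Om_anti, Om_xy θ0 θc h0 hc]; ring

lemma Om_yy (h0 : Cinf θ0) (hc : ∀ i, Cinf (θc i)) (p : E n) (i j : Fin n) :
    Om θ0 θc p (pdy i) (pdy j) = 0 := by
  simp only [Om, DT_apply θ0 θc h0 hc, pdy_1, pdy_21, pdy_22]
  simp

/- ---- sum linearity of Om and vector decompositions ---- -/

lemma Om_sum_left {ι : Type*} (s : Finset ι) (f : ι → E n) (p v : E n) :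
    Om θ0 θc p (∑ k ∈ s, f k) v = ∑ k ∈ s, Om θ0 θc p (f k) v := by
  simp only [Om, map_sum, ContinuousLinearMap.coe_sum', Finset.sum_apply,
    Finset.sum_sub_distrib]

lemma Om_sum_right {ι : Type*} (s : Finset ι) (f : ι → E n) (p u : E n) :
    Om θ0 θc p u (∑ k ∈ s, f k) = ∑ k ∈ s, Om θ0 θc p u (f k) := by
  simp only [Om, map_sum, ContinuousLinearMap.coe_sum', Finset.sum_apply,
    Finset.sum_sub_distrib]

lemma ypart_split (c : Fin n → ℝ) : ypart c = ∑ k, c k • pdy k := by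
  refine Prod.ext ?_ (Prod.ext ?_ ?_)
  · simp [Prod.fst_sum, pdy, ypart]
  · simp [Prod.snd_sum, Prod.fst_sum, pdy, ypart]
  · simp only [Prod.snd_sum, ypart_22]
    funext l
    simp [pdy, ypart, Finset.sum_apply, Pi.single_apply, mul_ite]

lemma xpart_split (b : Fin n → ℝ) : ((0:ℝ), b, (0:Fin n → ℝ)) = ∑ k, b k • pdx k := by
  refine Prod.ext ?_ (Prod.ext ?_ ?_)
  · simp [Prod.fst_sum, pdx]
  · simp only [Prod.snd_sum, Prod.fst_sum]
    funext l
    simp [pdx, Finset.sum_apply, Pi.single_apply, mul_ite]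
  · simp [Prod.snd_sum, pdx]

lemma ddx_split (p : E n) (i : Fin n) :
    ddx G i p = pdx i + ypart (fun k => -(Nc G k i p)) := by
  refine Prod.ext ?_ (Prod.ext ?_ ?_) <;> simp [ddx, pdx, ypart]

/- ---- Om evaluations ---- -/

variable {θ0} {θc}

section OmEval
variable (h0 : Cinf θ0) (hc : ∀ i, Cinf (θc i)) (hG : Cinf G)

include h0 hc

lemma Om_yp_x (p : E n) (c : Fin n → ℝ) (j : Fin n) :
    Om θ0 θc p (ypart c) (pdx j) = ∑ k, c k * gf θc k j p := by
  rw [ypart_split, Om_sum_left]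
  exact Finset.sum_congr rfl fun k _ => by rw [Om_smul_left, Om_yx θ0 θc h0 hc]

lemma Om_x_yp (p : E n) (i : Fin n) (c : Fin n → ℝ) :
    Om θ0 θc p (pdx i) (ypart c) = -∑ k, c k * gf θc k i p := by
  rw [ypart_split, Om_sum_right, ← Finset.sum_neg_distrib]
  exact Finset.sum_congr rfl fun k _ => by
    rw [Om_smul_right, Om_xy θ0 θc h0 hc]; ring

lemma Om_yp_y (p : E n) (c : Fin n → ℝ) (j : Fin n) :
    Om θ0 θc p (ypart c) (pdy j) = 0 := by
  rw [ypart_split, Om_sum_left]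
  refine Finset.sum_eq_zero fun k _ => by
    rw [Om_smul_left, Om_yy θ0 θc h0 hc, mul_zero]

lemma Om_y_yp (p : E n) (i : Fin n) (c : Fin n → ℝ) :
    Om θ0 θc p (pdy i) (ypart c) = 0 := by
  rw [ypart_split, Om_sum_right]
  refine Finset.sum_eq_zero fun k _ => by
    rw [Om_smul_right, Om_yy θ0 θc h0 hc, mul_zero]

lemma Om_yp_yp (p : E n) (c d : Fin n → ℝ) :
    Om θ0 θc p (ypart c) (ypart d) = 0 := by
  rw [ypart_split c, Om_sum_left]
  refine Finset.sum_eq_zero fun k _ => by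
    rw [Om_smul_left, Om_y_yp h0 hc, mul_zero]

lemma Om_ddx_x (p : E n) (k j : Fin n) :
    Om θ0 θc p (ddx G k p) (pdx j) = Af θc k j p - ∑ l, Nc G l k p * gf θc l j p := by
  rw [ddx_split, Om_add_left, Om_xx θ0 θc h0 hc, Om_yp_x h0 hc, sub_eq_add_neg,
    ← Finset.sum_neg_distrib]
  congr 1
  exact Finset.sum_congr rfl fun l _ => by ring

lemma Om_x_ddx (p : E n) (i k : Fin n) :
    Om θ0 θc p (pdx i) (ddx G k p) = Af θc i k p + ∑ l, Nc G l k p * gf θc l i p := by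
  rw [ddx_split, Om_add_right, Om_xx θ0 θc h0 hc, Om_x_yp h0 hc]
  congr 1
  rw [← Finset.sum_neg_distrib]
  exact Finset.sum_congr rfl fun l _ => by ring

lemma Om_ddx_y (p : E n) (k j : Fin n) :
    Om θ0 θc p (ddx G k p) (pdy j) = -(gf θc j k p) := by
  rw [ddx_split, Om_add_left, Om_xy θ0 θc h0 hc, Om_yp_y h0 hc, add_zero]

lemma Om_y_ddx (p : E n) (i k : Fin n) :
    Om θ0 θc p (pdy i) (ddx G k p) = gf θc i k p := by
  rw [ddx_split, Om_add_right, Om_yx θ0 θc h0 hc, Om_y_yp h0 hc, add_zero]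

end OmEval

/- ---- linearity of pointwise operators ---- -/

lemma dxi_add (i : Fin n) (p u v : E n) : dxi i p (u + v) = dxi i p u + dxi i p v := by
  simp only [dxi, Prod.fst_add, Prod.snd_add, Pi.add_apply]; ring

lemma dxi_smul (i : Fin n) (p : E n) (c : ℝ) (u : E n) :
    dxi i p (c • u) = c * dxi i p u := by
  simp only [dxi, Prod.smul_fst, Prod.smul_snd, Pi.smul_apply, smul_eq_mul]; ring

lemma dyi_add (hG : Cinf G) (i : Fin n) (p u v : E n) :
    dyi G i p (u + v) = dyi G i p u + dyi G i p v := by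
  simp only [dyi, Prod.fst_add, Prod.snd_add, Pi.add_apply, mul_add,
    Finset.sum_add_distrib]
  ring

lemma dyi_smul (i : Fin n) (p : E n) (c : ℝ) (u : E n) :
    dyi G i p (c • u) = c * dyi G i p u := by
  simp only [dyi, Prod.smul_fst, Prod.smul_snd, Pi.smul_apply, smul_eq_mul, mul_add,
    Finset.mul_sum]
  congr 1
  · congr 1
    exact Finset.sum_congr rfl fun j _ => by ring
  · ring

lemma Jv_add (p u v : E n) : Jv p (u + v) = Jv p u + Jv p v := by
  refine Prod.ext (by simp [Jv, ypart]) (Prod.ext (by simp [Jv, ypart]) ?_)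
  funext k
  simp only [Jv, ypart_22, Prod.snd_add, Pi.add_apply, dxi_add]

lemma Jv_smul (p : E n) (c : ℝ) (u : E n) : Jv p (c • u) = c • Jv p u := by
  refine Prod.ext (by simp [Jv, ypart]) (Prod.ext (by simp [Jv, ypart]) ?_)
  funext k
  simp only [Jv, ypart_22, Prod.smul_snd, Pi.smul_apply, dxi_smul, smul_eq_mul]

lemma hv_add (p u v : E n) : hv G p (u + v) = hv G p u + hv G p v := by
  simp only [hv, Prod.fst_add, dxi_add, add_smul, Finset.sum_add_distrib]
  abel

lemma hv_smul (p : E n) (c : ℝ) (u : E n) : hv G p (c • u) = c • hv G p u := by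
  simp only [hv, Prod.smul_fst, dxi_smul, smul_add, Finset.smul_sum, smul_smul, smul_eq_mul]

lemma Phi_add (p u v : E n) : Phi G p (u + v) = Phi G p u + Phi G p v := by
  refine Prod.ext (by simp [Phi, ypart]) (Prod.ext (by simp [Phi, ypart]) ?_)
  funext k
  simp only [Phi, ypart_22, Prod.snd_add, Pi.add_apply, dxi_add, mul_add,
    Finset.sum_add_distrib]

lemma Phi_smul (p : E n) (c : ℝ) (u : E n) : Phi G p (c • u) = c • Phi G p u := by
  refine Prod.ext (by simp [Phi, ypart]) (Prod.ext (by simp [Phi, ypart]) ?_)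
  funext k
  simp only [Phi, ypart_22, Prod.smul_snd, Pi.smul_apply, dxi_smul, smul_eq_mul,
    Finset.mul_sum]
  exact Finset.sum_congr rfl fun i _ => by ring

lemma Psi_add (hG : Cinf G) (p u v : E n) : Psi G p (u + v) = Psi G p u + Psi G p v := by
  simp only [Psi, dyi_add G hG, add_smul, Finset.sum_add_distrib, Phi_add]
  abel

lemma Psi_smul (p : E n) (c : ℝ) (u : E n) : Psi G p (c • u) = c • Psi G p u := by
  simp only [Psi, dyi_smul, Phi_smul, smul_sub, Finset.smul_sum, smul_smul]

/- ---- generic bilinear-form helpers ---- -/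

section Generic
variable (T : E n → E n → ℝ)
variable (haddl : ∀ u u' v, T (u + u') v = T u v + T u' v)
variable (hsmull : ∀ (c : ℝ) u v, T (c • u) v = c * T u v)
variable (haddr : ∀ u v v', T u (v + v') = T u v + T u v')
variable (hsmulr : ∀ (c : ℝ) u v, T u (c • v) = c * T u v)

include hsmull in
lemma T_zero_left (v : E n) : T 0 v = 0 := by
  have := hsmull 0 0 v
  simpa using this

include hsmulr in
lemma T_zero_right (u : E n) : T u 0 = 0 := by
  have := hsmulr 0 u 0
  simpa using this

include haddl hsmull in
lemma T_sum_left {ι : Type*} (s : Finset ι) (f : ι → E n) (v : E n) :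
    T (∑ k ∈ s, f k) v = ∑ k ∈ s, T (f k) v := by
  induction s using Finset.cons_induction with
  | empty => simpa using T_zero_left T hsmull v
  | cons a s ha ih => rw [Finset.sum_cons, Finset.sum_cons, haddl, ih]

include haddr hsmulr in
lemma T_sum_right {ι : Type*} (s : Finset ι) (f : ι → E n) (u : E n) :
    T u (∑ k ∈ s, f k) = ∑ k ∈ s, T u (f k) := by
  induction s using Finset.cons_induction with
  | empty => simpa using T_zero_right T hsmulr u
  | cons a s ha ih => rw [Finset.sum_cons, Finset.sum_cons, haddr, ih]

include haddl hsmull haddr hsmulr in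
lemma T_basis_vanish
    (hxx : ∀ i j, T (pdx i) (pdx j) = 0) (hxy : ∀ i j, T (pdx i) (pdy j) = 0)
    (hyx : ∀ i j, T (pdy i) (pdx j) = 0) (hyy : ∀ i j, T (pdy i) (pdy j) = 0) :
    ∀ u v : E n, u.1 = 0 → v.1 = 0 → T u v = 0 := by
  intro u v hu hv
  have eu : u = (∑ k, u.2.1 k • pdx k) + ∑ k, u.2.2 k • pdy k := by
    rw [← xpart_split, ← ypart_split]
    exact Prod.ext (by simp [hu, ypart]) (Prod.ext (by simp [ypart]) (by simp [ypart]))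
  have ev : v = (∑ k, v.2.1 k • pdx k) + ∑ k, v.2.2 k • pdy k := by
    rw [← xpart_split, ← ypart_split]
    exact Prod.ext (by simp [hv, ypart]) (Prod.ext (by simp [ypart]) (by simp [ypart]))
  rw [eu, ev]
  simp only [haddl, haddr, T_sum_left T haddl hsmull, T_sum_right T haddr hsmulr,
    hsmull, hsmulr, hxx, hxy, hyx, hyy, mul_zero, Finset.sum_const_zero, add_zero]

include haddl hsmull haddr hsmulr in
lemma T_split (hanti : ∀ u v, T u v = - T v u) {s : E n} (hs : s.1 = 1)
    (h0 : ∀ u v : E n, u.1 = 0 → v.1 = 0 → T u v = 0) (u v : E n) :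
    T u v = u.1 * T s v - v.1 * T s u := by
  have hss : T s s = 0 := by
    have := hanti s s
    linarith
  have hu0 : (u - u.1 • s).1 = 0 := by
    simp [Prod.fst_sub, Prod.smul_fst, hs]
  have hv0 : (v - v.1 • s).1 = 0 := by
    simp [Prod.fst_sub, Prod.smul_fst, hs]
  have eu : u = u.1 • s + (u - u.1 • s) := by abel
  have ev : v = v.1 • s + (v - v.1 • s) := by abel
  have hTsv : T s (v - v.1 • s) = T s v - v.1 * T s s := by
    have : v - v.1 • s = v + (-v.1) • s := by
      rw [neg_smul]; abel
    rw [this, haddr, hsmulr]; ring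
  have hTus : T (u - u.1 • s) s = - T s (u - u.1 • s) := hanti _ _
  have hTsu : T s (u - u.1 • s) = T s u - u.1 * T s s := by
    have : u - u.1 • s = u + (-u.1) • s := by
      rw [neg_smul]; abel
    rw [this, haddr, hsmulr]; ring
  have e1 : T u v = u.1 * (v.1 * T s s) + u.1 * T s (v - v.1 • s)
      + (v.1 * T (u - u.1 • s) s + T (u - u.1 • s) (v - v.1 • s)) := by
    conv_lhs => rw [eu, ev]
    simp only [haddl, haddr, hsmull, hsmulr]
    try ring
  rw [e1, h0 _ _ hu0 hv0, hTus, hTsu, hTsv, hss]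
  ring

end Generic

/- ---- basis values of the pointwise operators ---- -/

lemma SD_pdx (hG : Cinf G) (p : E n) (i : Fin n) :
    SD G p (pdx i) = ypart (fun k => -(2 * Gx G k i p)) := by
  rw [SD_apply G hG]; rfl

lemma SD_pdy (hG : Cinf G) (p : E n) (j : Fin n) :
    SD G p (pdy j) = pdx j + ypart (fun k => -(2 * Nc G k j p)) := by
  rw [SD_apply G hG]
  refine Prod.ext (by simp [pdx, ypart]) (Prod.ext (by simp [pdx, ypart]) ?_)
  simp only [Prod.snd_add, ypart_22]
  funext k
  simp [pdx, ypart, Nc]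

lemma Jv_pdx (p : E n) (i : Fin n) : Jv p (pdx i) = pdy i := by
  refine Prod.ext rfl (Prod.ext rfl ?_)
  funext k
  simp [Jv, dxi, pdy, ypart]

lemma Jv_pdy (p : E n) (i : Fin n) : Jv p (pdy i) = 0 := by
  refine Prod.ext rfl (Prod.ext rfl ?_)
  funext k
  simp [Jv, dxi, ypart]

lemma hv_pdx (p : E n) (i : Fin n) : hv G p (pdx i) = ddx G i p := by
  simp only [hv, pdx_1, zero_smul, zero_add, dxi, pdx_21, pdx_22, mul_zero, sub_zero]
  simp [Pi.single_apply, ite_smul, Finset.sum_ite_eq']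

lemma hv_pdy (p : E n) (i : Fin n) : hv G p (pdy i) = 0 := by
  simp [hv, dxi]

lemma Phi_pdx (p : E n) (i : Fin n) : Phi G p (pdx i) = ypart (fun k => Rjac G k i p) := by
  refine Prod.ext rfl (Prod.ext rfl ?_)
  funext k
  simp [Phi, dxi, ypart, Pi.single_apply, mul_ite, Finset.sum_ite_eq']

lemma Phi_pdy (p : E n) (i : Fin n) : Phi G p (pdy i) = 0 := by
  refine Prod.ext rfl (Prod.ext rfl ?_)
  funext k
  simp [Phi, dxi, ypart]

lemma Psi_pdy (p : E n) (j : Fin n) : Psi G p (pdy j) = ddx G j p := by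
  simp only [Psi, dyi, pdy_1, pdy_21, pdy_22, Pi.zero_apply, mul_zero,
    Finset.sum_const_zero, add_zero, Phi_pdy, sub_zero]
  simp [Pi.single_apply, ite_smul, Finset.sum_ite_eq']

lemma Psi_pdx (p : E n) (i : Fin n) :
    Psi G p (pdx i) = (∑ k, Nc G k i p • ddx G k p) - ypart (fun k => Rjac G k i p) := by
  simp only [Psi, dyi, pdx_1, pdx_21, pdx_22, Pi.zero_apply, mul_zero, zero_add,
    add_zero, Phi_pdx]
  congr 1
  refine Finset.sum_congr rfl fun k _ => ?_
  congr 1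
  simp [Pi.single_apply, mul_ite, Finset.sum_ite_eq']

/- ---- LOm via the S-derivative of the component functions ---- -/

lemma DDT_scalar (h0 : Cinf θ0) (hc : ∀ i, Cinf (θc i)) (p w u v : E n) :
    fderiv ℝ (fun q => DT θ0 θc q u v) p w = fderiv ℝ (DT θ0 θc) p w u v := by
  have hDT := cinf_DT θ0 θc h0 hc
  have h1 : fderiv ℝ (fun q => DT θ0 θc q u) p = (fderiv ℝ (DT θ0 θc) p).flip u := by
    rw [fderiv_clm_apply hDT.diffAt (differentiableAt_const u)]
    simp
  have hDTu : Cinf (fun q => DT θ0 θc q u) := hDT.clm_apply contDiff_const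
  rw [show (fun q => DT θ0 θc q u v) = fun q => (fun r => DT θ0 θc r u) q v from rfl,
    fderiv_clm_apply (Cinf.diffAt hDTu) (differentiableAt_const v)]
  simp [h1]

lemma LOm_eq_vfd (h0 : Cinf θ0) (hc : ∀ i, Cinf (θc i)) (p u v : E n) :
    LOm θ0 θc G p u v = vfd (Ssp G) (fun q => Om θ0 θc q u v) p
      + Om θ0 θc p (SD G p u) v + Om θ0 θc p u (SD G p v) := by
  have hDT := cinf_DT θ0 θc h0 hc
  have hd : ∀ a b : E n, DifferentiableAt ℝ (fun q => DT θ0 θc q a b) p :=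
    fun a b => Cinf.diffAt ((hDT.clm_apply contDiff_const).clm_apply contDiff_const)
  have : vfd (Ssp G) (fun q => Om θ0 θc q u v) p
      = fderiv ℝ (DT θ0 θc) p (Ssp G p) u v - fderiv ℝ (DT θ0 θc) p (Ssp G p) v u := by
    show fderiv ℝ (fun q => Om θ0 θc q u v) p (Ssp G p) = _
    rw [show (fun q => Om θ0 θc q u v)
        = fun q => (fun r => DT θ0 θc r u v) q - (fun r => DT θ0 θc r v u) q from rfl,
      fderiv_fun_sub (hd u v) (hd v u), ContinuousLinearMap.sub_apply,
      DDT_scalar h0 hc, DDT_scalar h0 hc]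
  rw [this]
  simp only [LOm]

/- ---- component formulas ---- -/

lemma cinf_gf (hc : ∀ i, Cinf (θc i)) (i j : Fin n) : Cinf (gf θc i j) :=
  (hc j).fderivR.clm_apply contDiff_const

lemma cinf_axf (hc : ∀ i, Cinf (θc i)) (i j : Fin n) : Cinf (axf θc i j) :=
  (hc j).fderivR.clm_apply contDiff_const

lemma cinf_Af (hc : ∀ i, Cinf (θc i)) (i j : Fin n) : Cinf (Af θc i j) :=
  (cinf_axf hc i j).sub (cinf_axf hc j i)

lemma LOm_yy (h0 : Cinf θ0) (hc : ∀ i, Cinf (θc i)) (hG : Cinf G) (p : E n) (i j : Fin n) :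
    LOm θ0 θc G p (pdy i) (pdy j) = gf θc i j p - gf θc j i p := by
  rw [LOm_eq_vfd G h0 hc, show (fun q => Om θ0 θc q (pdy i) (pdy j)) = fun _ => (0:ℝ) from
      funext fun q => Om_yy θ0 θc h0 hc q i j]
  rw [show vfd (Ssp G) (fun _ => (0:ℝ)) p = 0 by
      show fderiv ℝ (fun _ => (0:ℝ)) p (Ssp G p) = 0
      rw [fderiv_fun_const]; rfl]
  rw [SD_pdy G hG, SD_pdy G hG, Om_add_left, Om_add_right,
    Om_xy θ0 θc h0 hc, Om_yp_y h0 hc, Om_yx θ0 θc h0 hc, Om_y_yp h0 hc]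
  ring

lemma LOm_xy (h0 : Cinf θ0) (hc : ∀ i, Cinf (θc i)) (hG : Cinf G) (p : E n) (i j : Fin n) :
    LOm θ0 θc G p (pdx i) (pdy j)
      = -(vfd (Ssp G) (gf θc j i) p) + Af θc i j p
        + 2 * ∑ k, Nc G k j p * gf θc k i p := by
  rw [LOm_eq_vfd G h0 hc, show (fun q => Om θ0 θc q (pdx i) (pdy j))
      = fun q => -(gf θc j i q) from funext fun q => Om_xy θ0 θc h0 hc q i j]
  rw [show vfd (Ssp G) (fun q => -(gf θc j i q)) p = -(vfd (Ssp G) (gf θc j i) p) by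
      show fderiv ℝ (fun q => -(gf θc j i q)) p (Ssp G p) = _
      rw [fderiv_fun_neg]; rfl]
  rw [SD_pdx G hG, SD_pdy G hG, Om_add_right, Om_yp_y h0 hc,
    Om_xx θ0 θc h0 hc, Om_x_yp h0 hc]
  rw [show -∑ k, -(2 * Nc G k j p) * gf θc k i p = 2 * ∑ k, Nc G k j p * gf θc k i p by
    rw [← Finset.sum_neg_distrib, Finset.mul_sum]
    exact Finset.sum_congr rfl fun k _ => by ring]
  ring

lemma LOm_xx (h0 : Cinf θ0) (hc : ∀ i, Cinf (θc i)) (hG : Cinf G) (p : E n) (i j : Fin n) :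
    LOm θ0 θc G p (pdx i) (pdx j)
      = vfd (Ssp G) (Af θc i j) p - 2 * ∑ k, Gx G k i p * gf θc k j p
        + 2 * ∑ k, Gx G k j p * gf θc k i p := by
  rw [LOm_eq_vfd G h0 hc, show (fun q => Om θ0 θc q (pdx i) (pdx j))
      = fun q => Af θc i j q from funext fun q => Om_xx θ0 θc h0 hc q i j]
  rw [SD_pdx G hG, SD_pdx G hG, Om_yp_x h0 hc, Om_x_yp h0 hc]
  rw [show ∑ k, -(2 * Gx G k i p) * gf θc k j p = -(2 * ∑ k, Gx G k i p * gf θc k j p) by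
      rw [Finset.mul_sum, ← Finset.sum_neg_distrib]
      exact Finset.sum_congr rfl fun k _ => by ring,
    show -∑ k, -(2 * Gx G k j p) * gf θc k i p = 2 * ∑ k, Gx G k j p * gf θc k i p by
      rw [← Finset.sum_neg_distrib, Finset.mul_sum]
      exact Finset.sum_congr rfl fun k _ => by ring]
  show vfd (Ssp G) (Af θc i j) p + _ + _ = _
  ring

/- Psi-term evaluations -/

lemma OmPsi_xx1 (h0 : Cinf θ0) (hc : ∀ i, Cinf (θc i)) (p : E n) (i j : Fin n) :
    Om θ0 θc p (Psi G p (pdx i)) (pdx j)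
      = ∑ k, Nc G k i p * (Af θc k j p - ∑ l, Nc G l k p * gf θc l j p)
        - ∑ k, Rjac G k i p * gf θc k j p := by
  rw [Psi_pdx, Om_sub_left, Om_sum_left, Om_yp_x h0 hc]
  congr 1
  exact Finset.sum_congr rfl fun k _ => by
    rw [Om_smul_left, Om_ddx_x G h0 hc]

lemma OmPsi_xx2 (h0 : Cinf θ0) (hc : ∀ i, Cinf (θc i)) (p : E n) (i j : Fin n) :
    Om θ0 θc p (pdx i) (Psi G p (pdx j))
      = ∑ k, Nc G k j p * (Af θc i k p + ∑ l, Nc G l k p * gf θc l i p)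
        + ∑ k, Rjac G k j p * gf θc k i p := by
  rw [Psi_pdx, Om_sub_right, Om_sum_right, Om_x_yp h0 hc, sub_neg_eq_add]
  congr 1
  exact Finset.sum_congr rfl fun k _ => by
    rw [Om_smul_right, Om_x_ddx G h0 hc]

lemma OmPsi_xy1 (h0 : Cinf θ0) (hc : ∀ i, Cinf (θc i)) (p : E n) (i j : Fin n) :
    Om θ0 θc p (Psi G p (pdx i)) (pdy j) = -∑ k, Nc G k i p * gf θc j k p := by
  rw [Psi_pdx, Om_sub_left, Om_sum_left, Om_yp_y h0 hc, sub_zero,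
    ← Finset.sum_neg_distrib]
  exact Finset.sum_congr rfl fun k _ => by
    rw [Om_smul_left, Om_ddx_y G h0 hc]; ring

lemma OmPsi_xy2 (h0 : Cinf θ0) (hc : ∀ i, Cinf (θc i)) (p : E n) (i j : Fin n) :
    Om θ0 θc p (pdx i) (Psi G p (pdy j))
      = Af θc i j p + ∑ l, Nc G l j p * gf θc l i p := by
  rw [Psi_pdy, Om_x_ddx G h0 hc]

lemma OmPsi_yy1 (h0 : Cinf θ0) (hc : ∀ i, Cinf (θc i)) (p : E n) (i j : Fin n) :
    Om θ0 θc p (Psi G p (pdy i)) (pdy j) = -(gf θc j i p) := by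
  rw [Psi_pdy, Om_ddx_y G h0 hc]

lemma OmPsi_yy2 (h0 : Cinf θ0) (hc : ∀ i, Cinf (θc i)) (p : E n) (i j : Fin n) :
    Om θ0 θc p (pdy i) (Psi G p (pdy j)) = gf θc i j p := by
  rw [Psi_pdy, Om_y_ddx G h0 hc]

lemma OmPsi_yx1 (h0 : Cinf θ0) (hc : ∀ i, Cinf (θc i)) (p : E n) (i j : Fin n) :
    Om θ0 θc p (Psi G p (pdy i)) (pdx j)
      = Af θc i j p - ∑ l, Nc G l i p * gf θc l j p := by
  rw [Psi_pdy, Om_ddx_x G h0 hc]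

lemma OmPsi_yx2 (h0 : Cinf θ0) (hc : ∀ i, Cinf (θc i)) (p : E n) (i j : Fin n) :
    Om θ0 θc p (pdy i) (Psi G p (pdx j)) = ∑ k, Nc G k j p * gf θc i k p := by
  rw [Psi_pdx, Om_sub_right, Om_sum_right, Om_y_yp h0 hc, sub_zero]
  exact Finset.sum_congr rfl fun k _ => by
    rw [Om_smul_right, Om_y_ddx G h0 hc]

/- ---- the algebraic heart ---- -/

section Algebra

/-- condition C1: `g` symmetric -/
def C1 (p : E n) : Prop := ∀ i j, gf θc i j p = gf θc j i p
/-- condition C2: `A = Ng - gN` -/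
def C2 (p : E n) : Prop := ∀ i j,
  Af θc i j p = ∑ k, Nc G k i p * gf θc k j p - ∑ k, Nc G k j p * gf θc k i p
/-- condition C3: `Rg` symmetric -/
def C3 (p : E n) : Prop := ∀ i j,
  ∑ k, Rjac G k i p * gf θc k j p = ∑ k, Rjac G k j p * gf θc k i p
/-- condition C4: `∇g = 0` -/
def C4 (p : E n) : Prop := ∀ a b,
  vfd (Ssp G) (gf θc a b) p = ∑ k, Nc G k a p * gf θc k b p + ∑ k, Nc G k b p * gf θc a k p

lemma Af_anti (p : E n) (i j : Fin n) : Af θc j i p = -(Af θc i j p) := by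
  simp only [Af]; ring

lemma Rjac_eq (p : E n) (k i : Fin n) :
    Rjac G k i p = 2 * Gx G k i p - (∑ l, Nc G k l p * Nc G l i p)
      - vfd (Ssp G) (Nc G k i) p := rfl

/-- differentiating C2 along the semispray -/
lemma ALG1 (hc : ∀ i, Cinf (θc i)) (hG : Cinf G)
    (h2 : ∀ q : E n, C2 (θc := θc) (G := G) q) (p : E n) (i j : Fin n) :
    vfd (Ssp G) (Af θc i j) p
      = ∑ k, (Nc G k i p * vfd (Ssp G) (gf θc k j) p
            + gf θc k j p * vfd (Ssp G) (Nc G k i) p)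
        - ∑ k, (Nc G k j p * vfd (Ssp G) (gf θc k i) p
            + gf θc k i p * vfd (Ssp G) (Nc G k j) p) := by
  have e : Af θc i j = fun q => (∑ k, Nc G k i q * gf θc k j q)
      - ∑ k, Nc G k j q * gf θc k i q := funext fun q => h2 q i j
  show fderiv ℝ (Af θc i j) p (Ssp G p) = _
  rw [e, fderiv_fun_sub
      (DifferentiableAt.fun_sum fun k _ =>
        ((cinf_Nc G hG k i).diffAt).fun_mul ((cinf_gf hc k j).diffAt))
      (DifferentiableAt.fun_sum fun k _ =>
        ((cinf_Nc G hG k j).diffAt).fun_mul ((cinf_gf hc k i).diffAt)),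
    fderiv_fun_sum (fun k _ => ((cinf_Nc G hG k i).diffAt).fun_mul ((cinf_gf hc k j).diffAt)),
    fderiv_fun_sum (fun k _ => ((cinf_Nc G hG k j).diffAt).fun_mul ((cinf_gf hc k i).diffAt))]
  simp only [ContinuousLinearMap.sub_apply, ContinuousLinearMap.coe_sum',
    Finset.sum_apply]
  congr 1
  · refine Finset.sum_congr rfl fun k _ => ?_
    rw [fderiv_fun_mul ((cinf_Nc G hG k i).diffAt) ((cinf_gf hc k j).diffAt)]
    simp only [ContinuousLinearMap.add_apply, ContinuousLinearMap.coe_smul',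
      Pi.smul_apply, smul_eq_mul]
    rfl
  · refine Finset.sum_congr rfl fun k _ => ?_
    rw [fderiv_fun_mul ((cinf_Nc G hG k j).diffAt) ((cinf_gf hc k i).diffAt)]
    simp only [ContinuousLinearMap.add_apply, ContinuousLinearMap.coe_smul',
      Pi.smul_apply, smul_eq_mul]
    rfl

/-- the key xx-identity -/
lemma ALG2 (hc : ∀ i, Cinf (θc i)) (hG : Cinf G)
    (h1 : ∀ q : E n, C1 (θc := θc) q) (h2 : ∀ q : E n, C2 (θc := θc) (G := G) q)
    (h4 : ∀ q : E n, C4 (θc := θc) (G := G) q) (p : E n) (i j : Fin n) :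
    vfd (Ssp G) (Af θc i j) p - 2 * ∑ k, Gx G k i p * gf θc k j p
        + 2 * ∑ k, Gx G k j p * gf θc k i p
      = -∑ k, Rjac G k i p * gf θc k j p + ∑ k, Rjac G k j p * gf θc k i p := by
  have key : ∀ a b : Fin n,
      ∑ k, Nc G k a p * vfd (Ssp G) (gf θc k b) p
        = (∑ k, (∑ l, Nc G k l p * Nc G l a p) * gf θc k b p)
          + ∑ k, ∑ l, Nc G k a p * Nc G l b p * gf θc k l p := by
    intro a b
    have e1 : ∀ k, Nc G k a p * vfd (Ssp G) (gf θc k b) p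
        = (∑ l, Nc G k a p * (Nc G l k p * gf θc l b p))
          + ∑ l, Nc G k a p * (Nc G l b p * gf θc k l p) := by
      intro k
      rw [h4 p k b, mul_add, Finset.mul_sum, Finset.mul_sum]
    rw [Finset.sum_congr rfl fun k _ => e1 k, Finset.sum_add_distrib]
    congr 1
    · rw [Finset.sum_comm]
      refine Finset.sum_congr rfl fun k _ => ?_
      rw [Finset.sum_mul]
      refine Finset.sum_congr rfl fun l _ => by ring
    · refine Finset.sum_congr rfl fun k _ => Finset.sum_congr rfl fun l _ => by ring
  have mixed : ∑ k, ∑ l, Nc G k i p * Nc G l j p * gf θc k l p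
      = ∑ k, ∑ l, Nc G k j p * Nc G l i p * gf θc k l p := by
    rw [Finset.sum_comm]
    refine Finset.sum_congr rfl fun k _ => Finset.sum_congr rfl fun l _ => ?_
    rw [h1 p l k]
    ring
  rw [ALG1 G hc hG h2 p i j]
  simp only [Finset.sum_add_distrib]
  rw [key i j, key j i]
  have eR : ∀ a b : Fin n, ∑ k, Rjac G k a p * gf θc k b p
      = ∑ k, (2 * Gx G k a p - (∑ l, Nc G k l p * Nc G l a p)
          - vfd (Ssp G) (Nc G k a) p) * gf θc k b p :=
    fun a b => Finset.sum_congr rfl fun k _ => by rw [Rjac_eq]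
  rw [eR i j, eR j i]
  simp only [sub_mul, Finset.sum_sub_distrib]
  have egf : ∀ a b : Fin n, ∑ k, gf θc k b p * vfd (Ssp G) (Nc G k a) p
      = ∑ k, vfd (Ssp G) (Nc G k a) p * gf θc k b p :=
    fun a b => Finset.sum_congr rfl fun k _ => by ring
  rw [egf i j, egf j i, mixed,
    show (2:ℝ) * ∑ k, Gx G k i p * gf θc k j p = ∑ k, 2 * Gx G k i p * gf θc k j p by
      rw [Finset.mul_sum]; exact Finset.sum_congr rfl fun k _ => by ring,
    show (2:ℝ) * ∑ k, Gx G k j p * gf θc k i p = ∑ k, 2 * Gx G k j p * gf θc k i p by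
      rw [Finset.mul_sum]; exact Finset.sum_congr rfl fun k _ => by ring]
  ring

lemma Om_zero_left (p v : E n) : Om θ0 θc p 0 v = 0 := by
  simp [Om]

lemma Om_zero_right (p u : E n) : Om θ0 θc p u 0 = 0 := by
  simp [Om]

/-- recovering C4 from the xy-component of `L_S dθ = 0` -/
lemma ALG0C4 (h1 : ∀ q : E n, C1 (θc := θc) q)
    (hxy : ∀ (q : E n) (i j : Fin n), -(vfd (Ssp G) (gf θc j i) q) + Af θc i j q
      + 2 * ∑ k, Nc G k j q * gf θc k i q = 0) :
    ∀ q : E n, C4 (θc := θc) G q := by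
  intro q a b
  have e1 := hxy q b a
  have e2 := hxy q a b
  have hgf : gf θc a b = gf θc b a := funext fun r => h1 r a b
  have hAf : Af θc a b q = -(Af θc b a q) := Af_anti q b a
  have hS : vfd (Ssp G) (gf θc b a) q = vfd (Ssp G) (gf θc a b) q := by rw [← hgf]
  rw [hS] at e2
  rw [show ∑ k, Nc G k b q * gf θc a k q = ∑ k, Nc G k b q * gf θc k a q from
    Finset.sum_congr rfl fun k _ => by rw [h1 q a k]]
  linarith [e1, e2]

/-- recovering C2 from the xy-component of `L_S dθ = 0` -/
lemma ALG0C2 (h1 : ∀ q : E n, C1 (θc := θc) q)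
    (hxy : ∀ (q : E n) (i j : Fin n), -(vfd (Ssp G) (gf θc j i) q) + Af θc i j q
      + 2 * ∑ k, Nc G k j q * gf θc k i q = 0) :
    ∀ q : E n, C2 (θc := θc) G q := by
  intro q a b
  have e1 := hxy q a b
  have e2 := hxy q b a
  have hgf : gf θc a b = gf θc b a := funext fun r => h1 r a b
  have hAf : Af θc b a q = -(Af θc a b q) := Af_anti q a b
  have hS : vfd (Ssp G) (gf θc a b) q = vfd (Ssp G) (gf θc b a) q := by rw [hgf]
  rw [hS] at e2
  linarith [e1, e2]

/-- the xy-component vanishes given C1, C2, C4 -/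
lemma ALG3 (h1 : C1 (θc := θc) p) (h2 : C2 (θc := θc) G p) (h4 : C4 (θc := θc) G p)
    (i j : Fin n) :
    -(vfd (Ssp G) (gf θc j i) p) + Af θc i j p + 2 * ∑ k, Nc G k j p * gf θc k i p = 0 := by
  rw [h4 j i, h2 i j]
  have : ∑ k, Nc G k i p * gf θc j k p = ∑ k, Nc G k i p * gf θc k j p :=
    Finset.sum_congr rfl fun k _ => by rw [h1 j k]
  rw [this]
  ring

/-- the Psi xx-combination vanishes given C1, C2, C3 -/
lemma ALG4 (h1 : C1 (θc := θc) p) (h2 : C2 (θc := θc) G p) (h3 : C3 (θc := θc) G p)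
    (i j : Fin n) :
    (∑ k, Nc G k i p * (Af θc k j p - ∑ l, Nc G l k p * gf θc l j p)
      - ∑ k, Rjac G k i p * gf θc k j p)
    + (∑ k, Nc G k j p * (Af θc i k p + ∑ l, Nc G l k p * gf θc l i p)
      + ∑ k, Rjac G k j p * gf θc k i p) = 0 := by
  have key1 : ∑ k, Nc G k i p * (Af θc k j p - ∑ l, Nc G l k p * gf θc l j p)
      = ∑ k, ∑ l, -(Nc G k i p * (Nc G l j p * gf θc l k p)) := by
    refine Finset.sum_congr rfl fun k _ => ?_
    rw [show Af θc k j p - ∑ l, Nc G l k p * gf θc l j p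
        = -∑ l, Nc G l j p * gf θc l k p by rw [h2 k j]; ring,
      mul_neg, Finset.mul_sum, ← Finset.sum_neg_distrib]
  have key2 : ∑ k, Nc G k j p * (Af θc i k p + ∑ l, Nc G l k p * gf θc l i p)
      = ∑ k, ∑ l, Nc G k j p * (Nc G l i p * gf θc l k p) := by
    refine Finset.sum_congr rfl fun k _ => ?_
    rw [show Af θc i k p + ∑ l, Nc G l k p * gf θc l i p
        = ∑ l, Nc G l i p * gf θc l k p by rw [h2 i k]; ring,
      Finset.mul_sum]
  have mixed : ∑ k, ∑ l, Nc G k j p * (Nc G l i p * gf θc l k p)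
      = ∑ k, ∑ l, Nc G k i p * (Nc G l j p * gf θc l k p) := by
    rw [Finset.sum_comm]
    refine Finset.sum_congr rfl fun k _ => Finset.sum_congr rfl fun l _ => ?_
    rw [h1 k l]
    ring
  rw [key1, key2, mixed, h3 i j]
  rw [show ∑ k, ∑ l, -(Nc G k i p * (Nc G l j p * gf θc l k p))
      = -∑ k, ∑ l, Nc G k i p * (Nc G l j p * gf θc l k p) by
    rw [← Finset.sum_neg_distrib]
    exact Finset.sum_congr rfl fun k _ => by rw [← Finset.sum_neg_distrib]]
  ring

end Algebra

/- ---- bilinearity of LOm ---- -/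

lemma LOm_addl (p u u' v : E n) :
    LOm θ0 θc G p (u + u') v = LOm θ0 θc G p u v + LOm θ0 θc G p u' v := by
  simp only [LOm, map_add, ContinuousLinearMap.add_apply, Om_add_left, Om_add_right]
  ring

lemma LOm_addr (p u v v' : E n) :
    LOm θ0 θc G p u (v + v') = LOm θ0 θc G p u v + LOm θ0 θc G p u v' := by
  simp only [LOm, map_add, ContinuousLinearMap.add_apply, Om_add_left, Om_add_right]
  ring

lemma LOm_smull (p : E n) (c : ℝ) (u v : E n) :
    LOm θ0 θc G p (c • u) v = c * LOm θ0 θc G p u v := by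
  simp only [LOm, map_smul, ContinuousLinearMap.smul_apply, smul_eq_mul,
    Om_smul_left, Om_smul_right]
  ring

lemma LOm_smulr (p : E n) (c : ℝ) (u v : E n) :
    LOm θ0 θc G p u (c • v) = c * LOm θ0 θc G p u v := by
  simp only [LOm, map_smul, ContinuousLinearMap.smul_apply, smul_eq_mul,
    Om_smul_left, Om_smul_right]
  ring

lemma Ssp_fst (p : E n) : (Ssp G p).1 = 1 := rfl

/- ---- bridges between the Lean-level conditions and component conditions ---- -/

lemma B0 (h0 : Cinf θ0) (hc : ∀ i, Cinf (θc i)) (hG : Cinf G) :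
    (∀ X Y : E n → E n, Cinf X → Cinf Y → ∀ p : E n,
        extDop (lieD (Ssp G) (sbform θ0 θc)) X Y p = 0)
      ↔ ∀ (p u v : E n), LOm θ0 θc G p u v = 0 := by
  constructor
  · intro h p u v
    have hq := h (fun _ => u) (fun _ => v) contDiff_const contDiff_const p
    rwa [extDop_eq θ0 θc G h0 hc hG contDiff_const contDiff_const p,
      fderiv_Mu_antisym θ0 θc G h0 hc hG p u v] at hq
  · intro h X Y hX hY p
    rw [extDop_eq θ0 θc G h0 hc hG hX hY p,
      fderiv_Mu_antisym θ0 θc G h0 hc hG p (X p) (Y p), h]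

lemma B5 (h0 : Cinf θ0) (hc : ∀ i, Cinf (θc i)) (hG : Cinf G) :
    (∀ X : E n → E n, Cinf X → ∀ p : E n,
        fderiv ℝ (extD (sbform θ0 θc) (Ssp G) X) p (Ssp G p)
          - extD (sbform θ0 θc) (Ssp G) (lieb (Ssp G) X) p = 0)
      ↔ ∀ (p w : E n), LOm θ0 θc G p (Ssp G p) w = 0 := by
  constructor
  · intro h p w
    have hq := h (fun _ => w) contDiff_const p
    rwa [DSexpr_eq θ0 θc G h0 hc hG contDiff_const p] at hq
  · intro h X hX p
    rw [DSexpr_eq θ0 θc G h0 hc hG hX p, h]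

lemma B1 (h0 : Cinf θ0) (hc : ∀ i, Cinf (θc i)) (hG : Cinf G) :
    (∀ X Y Z : E n → E n, Cinf X → Cinf Y → Cinf Z → ∀ p : E n,
        dJf (sbform θ0 θc) X Y p * (Z p).1 + dJf (sbform θ0 θc) Y Z p * (X p).1
          + dJf (sbform θ0 θc) Z X p * (Y p).1 = 0)
      ↔ ∀ p : E n, C1 (θc := θc) p := by
  constructor
  · intro h p i j
    have hq := h (fun _ => pdx i) (fun _ => pdx j) (Ssp G) contDiff_const contDiff_const
      (cinf_Ssp G hG) p
    rw [dJf_eq θ0 θc h0 hc contDiff_const contDiff_const p,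
      dJf_eq θ0 θc h0 hc contDiff_const (cinf_Ssp G hG) p,
      dJf_eq θ0 θc h0 hc (cinf_Ssp G hG) contDiff_const p] at hq
    simp only [Ssp_fst, pdx_1, mul_zero, mul_one, add_zero, zero_add] at hq
    rw [Jv_pdx, Jv_pdx, Om_yx θ0 θc h0 hc, Om_xy θ0 θc h0 hc] at hq
    linarith
  · intro h X Y Z hX hY hZ p
    rw [dJf_eq θ0 θc h0 hc hX hY p, dJf_eq θ0 θc h0 hc hY hZ p,
      dJf_eq θ0 θc h0 hc hZ hX p]
    set T : E n → E n → ℝ :=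
      fun u v => Om θ0 θc p (Jv p u) v + Om θ0 θc p u (Jv p v) with hT
    have haddl : ∀ u u' v, T (u + u') v = T u v + T u' v := fun u u' v => by
      simp only [hT, Jv_add, Om_add_left, Om_add_right]; ring
    have hsmull : ∀ (c : ℝ) u v, T (c • u) v = c * T u v := fun c u v => by
      simp only [hT, Jv_smul, Om_smul_left, Om_smul_right]; ring
    have haddr : ∀ u v v', T u (v + v') = T u v + T u v' := fun u v v' => by
      simp only [hT, Jv_add, Om_add_left, Om_add_right]; ring
    have hsmulr : ∀ (c : ℝ) u v, T u (c • v) = c * T u v := fun c u v => by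
      simp only [hT, Jv_smul, Om_smul_left, Om_smul_right]; ring
    have hanti : ∀ u v, T u v = - T v u := fun u v => by
      have h1 := Om_anti θ0 θc p (Jv p u) v
      have h2 := Om_anti θ0 θc p u (Jv p v)
      simp only [hT]
      linarith
    have hker : ∀ u v : E n, u.1 = 0 → v.1 = 0 → T u v = 0 := by
      refine T_basis_vanish T haddl hsmull haddr hsmulr ?_ ?_ ?_ ?_
      · intro i j
        simp only [hT]
        rw [Jv_pdx, Jv_pdx, Om_yx θ0 θc h0 hc, Om_xy θ0 θc h0 hc, h p i j]
        ring
      · intro i j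
        simp only [hT]
        rw [Jv_pdx, Jv_pdy, Om_yy θ0 θc h0 hc, Om_zero_right]
        ring
      · intro i j
        simp only [hT]
        rw [Jv_pdy, Jv_pdx, Om_zero_left, Om_yy θ0 θc h0 hc]
        ring
      · intro i j
        simp only [hT]
        rw [Jv_pdy, Jv_pdy, Om_zero_left, Om_zero_right]
        ring
    have key : ∀ u v : E n, Om θ0 θc p (Jv p u) v + Om θ0 θc p u (Jv p v)
        = u.1 * T (Ssp G p) v - v.1 * T (Ssp G p) u :=
      fun u v => T_split T haddl hsmull haddr hsmulr hanti (Ssp_fst G p) hker u v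
    rw [key (X p) (Y p), key (Y p) (Z p), key (Z p) (X p)]
    ring

lemma B2 (h0 : Cinf θ0) (hc : ∀ i, Cinf (θc i)) (hG : Cinf G) :
    (∀ X Y Z : E n → E n, Cinf X → Cinf Y → Cinf Z → ∀ p : E n,
        dhf G (sbform θ0 θc) X Y p * (Z p).1 + dhf G (sbform θ0 θc) Y Z p * (X p).1
          + dhf G (sbform θ0 θc) Z X p * (Y p).1 = 0)
      ↔ ∀ p : E n, C2 (θc := θc) G p := by
  constructor
  · intro h p i j
    have hq := h (fun _ => pdx i) (fun _ => pdx j) (Ssp G) contDiff_const contDiff_const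
      (cinf_Ssp G hG) p
    rw [dhf_eq θ0 θc G h0 hc hG contDiff_const contDiff_const p,
      dhf_eq θ0 θc G h0 hc hG contDiff_const (cinf_Ssp G hG) p,
      dhf_eq θ0 θc G h0 hc hG (cinf_Ssp G hG) contDiff_const p] at hq
    simp only [Ssp_fst, pdx_1, mul_zero, mul_one, add_zero, zero_add] at hq
    rw [hv_pdx, hv_pdx, Om_ddx_x G h0 hc, Om_x_ddx G h0 hc, Om_xx θ0 θc h0 hc] at hq
    show Af θc i j p = ∑ k, Nc G k i p * gf θc k j p - ∑ k, Nc G k j p * gf θc k i p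
    linarith
  · intro h X Y Z hX hY hZ p
    rw [dhf_eq θ0 θc G h0 hc hG hX hY p, dhf_eq θ0 θc G h0 hc hG hY hZ p,
      dhf_eq θ0 θc G h0 hc hG hZ hX p]
    set T : E n → E n → ℝ :=
      fun u v => Om θ0 θc p (hv G p u) v + Om θ0 θc p u (hv G p v) - Om θ0 θc p u v
      with hT
    have haddl : ∀ u u' v, T (u + u') v = T u v + T u' v := fun u u' v => by
      simp only [hT, hv_add, Om_add_left, Om_add_right]; ring
    have hsmull : ∀ (c : ℝ) u v, T (c • u) v = c * T u v := fun c u v => by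
      simp only [hT, hv_smul, Om_smul_left, Om_smul_right]; ring
    have haddr : ∀ u v v', T u (v + v') = T u v + T u v' := fun u v v' => by
      simp only [hT, hv_add, Om_add_left, Om_add_right]; ring
    have hsmulr : ∀ (c : ℝ) u v, T u (c • v) = c * T u v := fun c u v => by
      simp only [hT, hv_smul, Om_smul_left, Om_smul_right]; ring
    have hanti : ∀ u v, T u v = - T v u := fun u v => by
      have h1 := Om_anti θ0 θc p (hv G p u) v
      have h2 := Om_anti θ0 θc p u (hv G p v)
      have h3 := Om_anti θ0 θc p u v
      simp only [hT]
      linarith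
    have hker : ∀ u v : E n, u.1 = 0 → v.1 = 0 → T u v = 0 := by
      refine T_basis_vanish T haddl hsmull haddr hsmulr ?_ ?_ ?_ ?_
      · intro i j
        simp only [hT]
        rw [hv_pdx, hv_pdx, Om_ddx_x G h0 hc, Om_x_ddx G h0 hc, Om_xx θ0 θc h0 hc,
          h p i j]
        ring
      · intro i j
        simp only [hT]
        rw [hv_pdx, hv_pdy, Om_ddx_y G h0 hc, Om_zero_right, Om_xy θ0 θc h0 hc]
        ring
      · intro i j
        simp only [hT]
        rw [hv_pdy, hv_pdx, Om_zero_left, Om_y_ddx G h0 hc, Om_yx θ0 θc h0 hc]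
        ring
      · intro i j
        simp only [hT]
        rw [hv_pdy, hv_pdy, Om_zero_left, Om_zero_right, Om_yy θ0 θc h0 hc]
        ring
    have key : ∀ u v : E n,
        Om θ0 θc p (hv G p u) v + Om θ0 θc p u (hv G p v) - Om θ0 θc p u v
          = u.1 * T (Ssp G p) v - v.1 * T (Ssp G p) u :=
      fun u v => T_split T haddl hsmull haddr hsmulr hanti (Ssp_fst G p) hker u v
    rw [key (X p) (Y p), key (Y p) (Z p), key (Z p) (X p)]
    ring

lemma B3 (h0 : Cinf θ0) (hc : ∀ i, Cinf (θc i)) (hG : Cinf G) :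
    (∀ X Y Z : E n → E n, Cinf X → Cinf Y → Cinf Z → ∀ p : E n,
        dPhif G (sbform θ0 θc) X Y p * (Z p).1 + dPhif G (sbform θ0 θc) Y Z p * (X p).1
          + dPhif G (sbform θ0 θc) Z X p * (Y p).1 = 0)
      ↔ ∀ p : E n, C3 (θc := θc) G p := by
  constructor
  · intro h p i j
    have hq := h (fun _ => pdx i) (fun _ => pdx j) (Ssp G) contDiff_const contDiff_const
      (cinf_Ssp G hG) p
    rw [dPhif_eq θ0 θc G h0 hc hG contDiff_const contDiff_const p,
      dPhif_eq θ0 θc G h0 hc hG contDiff_const (cinf_Ssp G hG) p,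
      dPhif_eq θ0 θc G h0 hc hG (cinf_Ssp G hG) contDiff_const p] at hq
    simp only [Ssp_fst, pdx_1, mul_zero, mul_one, add_zero, zero_add] at hq
    rw [Phi_pdx, Phi_pdx, Om_yp_x h0 hc, Om_x_yp h0 hc] at hq
    show ∑ k, Rjac G k i p * gf θc k j p = ∑ k, Rjac G k j p * gf θc k i p
    linarith
  · intro h X Y Z hX hY hZ p
    rw [dPhif_eq θ0 θc G h0 hc hG hX hY p, dPhif_eq θ0 θc G h0 hc hG hY hZ p,
      dPhif_eq θ0 θc G h0 hc hG hZ hX p]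
    set T : E n → E n → ℝ :=
      fun u v => Om θ0 θc p (Phi G p u) v + Om θ0 θc p u (Phi G p v) with hT
    have haddl : ∀ u u' v, T (u + u') v = T u v + T u' v := fun u u' v => by
      simp only [hT, Phi_add, Om_add_left, Om_add_right]; ring
    have hsmull : ∀ (c : ℝ) u v, T (c • u) v = c * T u v := fun c u v => by
      simp only [hT, Phi_smul, Om_smul_left, Om_smul_right]; ring
    have haddr : ∀ u v v', T u (v + v') = T u v + T u v' := fun u v v' => by
      simp only [hT, Phi_add, Om_add_left, Om_add_right]; ring
    have hsmulr : ∀ (c : ℝ) u v, T u (c • v) = c * T u v := fun c u v => by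
      simp only [hT, Phi_smul, Om_smul_left, Om_smul_right]; ring
    have hanti : ∀ u v, T u v = - T v u := fun u v => by
      have h1 := Om_anti θ0 θc p (Phi G p u) v
      have h2 := Om_anti θ0 θc p u (Phi G p v)
      simp only [hT]
      linarith
    have hker : ∀ u v : E n, u.1 = 0 → v.1 = 0 → T u v = 0 := by
      refine T_basis_vanish T haddl hsmull haddr hsmulr ?_ ?_ ?_ ?_
      · intro i j
        simp only [hT]
        rw [Phi_pdx, Phi_pdx, Om_yp_x h0 hc, Om_x_yp h0 hc, h p i j]
        ring
      · intro i j
        simp only [hT]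
        rw [Phi_pdx, Phi_pdy, Om_yp_y h0 hc, Om_zero_right]
        ring
      · intro i j
        simp only [hT]
        rw [Phi_pdy, Phi_pdx, Om_zero_left, Om_y_yp h0 hc]
        ring
      · intro i j
        simp only [hT]
        rw [Phi_pdy, Phi_pdy, Om_zero_left, Om_zero_right]
        ring
    have key : ∀ u v : E n,
        Om θ0 θc p (Phi G p u) v + Om θ0 θc p u (Phi G p v)
          = u.1 * T (Ssp G p) v - v.1 * T (Ssp G p) u :=
      fun u v => T_split T haddl hsmull haddr hsmulr hanti (Ssp_fst G p) hker u v
    rw [key (X p) (Y p), key (Y p) (Z p), key (Z p) (X p)]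
    ring

lemma B4 (h0 : Cinf θ0) (hc : ∀ i, Cinf (θc i)) (hG : Cinf G) :
    (∀ X Y Z : E n → E n, Cinf X → Cinf Y → Cinf Z → ∀ p : E n,
        nabD G (sbform θ0 θc) X Y p * (Z p).1 + nabD G (sbform θ0 θc) Y Z p * (X p).1
          + nabD G (sbform θ0 θc) Z X p * (Y p).1 = 0)
      ↔ ((∀ p : E n, C4 (θc := θc) G p) ∧ ∀ (p : E n) (i j : Fin n),
          LOm θ0 θc G p (pdx i) (pdx j)
            = Om θ0 θc p (Psi G p (pdx i)) (pdx j)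
              + Om θ0 θc p (pdx i) (Psi G p (pdx j))) := by
  have comp_xy : ∀ (p : E n) (i j : Fin n),
      LOm θ0 θc G p (pdx i) (pdy j)
          - (Om θ0 θc p (Psi G p (pdx i)) (pdy j) + Om θ0 θc p (pdx i) (Psi G p (pdy j)))
        = -(vfd (Ssp G) (gf θc j i) p) + ∑ k, Nc G k j p * gf θc k i p
          + ∑ k, Nc G k i p * gf θc j k p := by
    intro p i j
    rw [LOm_xy G h0 hc hG p i j, OmPsi_xy1 G h0 hc p i j, OmPsi_xy2 G h0 hc p i j]
    ring
  have comp_yy : ∀ (p : E n) (i j : Fin n),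
      LOm θ0 θc G p (pdy i) (pdy j)
          - (Om θ0 θc p (Psi G p (pdy i)) (pdy j) + Om θ0 θc p (pdy i) (Psi G p (pdy j)))
        = 0 := by
    intro p i j
    rw [LOm_yy G h0 hc hG p i j, OmPsi_yy1 G h0 hc p i j, OmPsi_yy2 G h0 hc p i j]
    ring
  constructor
  · intro h
    have hxyc : ∀ (p : E n) (i j : Fin n),
        LOm θ0 θc G p (pdx i) (pdy j)
          - (Om θ0 θc p (Psi G p (pdx i)) (pdy j)
            + Om θ0 θc p (pdx i) (Psi G p (pdy j))) = 0 := by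
      intro p i j
      have hq := h (fun _ => pdx i) (fun _ => pdy j) (Ssp G) contDiff_const contDiff_const
        (cinf_Ssp G hG) p
      rw [nabD_eq θ0 θc G h0 hc hG contDiff_const contDiff_const p,
        nabD_eq θ0 θc G h0 hc hG contDiff_const (cinf_Ssp G hG) p,
        nabD_eq θ0 θc G h0 hc hG (cinf_Ssp G hG) contDiff_const p] at hq
      simp only [Ssp_fst, pdx_1, pdy_1, mul_zero, mul_one, add_zero, zero_add] at hq
      linarith
    have hxxc : ∀ (p : E n) (i j : Fin n),
        LOm θ0 θc G p (pdx i) (pdx j)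
          - (Om θ0 θc p (Psi G p (pdx i)) (pdx j)
            + Om θ0 θc p (pdx i) (Psi G p (pdx j))) = 0 := by
      intro p i j
      have hq := h (fun _ => pdx i) (fun _ => pdx j) (Ssp G) contDiff_const contDiff_const
        (cinf_Ssp G hG) p
      rw [nabD_eq θ0 θc G h0 hc hG contDiff_const contDiff_const p,
        nabD_eq θ0 θc G h0 hc hG contDiff_const (cinf_Ssp G hG) p,
        nabD_eq θ0 θc G h0 hc hG (cinf_Ssp G hG) contDiff_const p] at hq
      simp only [Ssp_fst, pdx_1, mul_zero, mul_one, add_zero, zero_add] at hq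
      linarith
    refine ⟨fun p a b => ?_, fun p i j => by have := hxxc p i j; linarith⟩
    have := hxyc p b a
    rw [comp_xy p b a] at this
    linarith
  · rintro ⟨h4, hxx⟩ X Y Z hX hY hZ p
    rw [nabD_eq θ0 θc G h0 hc hG hX hY p, nabD_eq θ0 θc G h0 hc hG hY hZ p,
      nabD_eq θ0 θc G h0 hc hG hZ hX p]
    set T : E n → E n → ℝ := fun u v => LOm θ0 θc G p u v
      - (Om θ0 θc p (Psi G p u) v + Om θ0 θc p u (Psi G p v)) with hT
    have haddl : ∀ u u' v, T (u + u') v = T u v + T u' v := fun u u' v => by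
      simp only [hT, Psi_add G hG, Om_add_left, Om_add_right, LOm_addl]; ring
    have hsmull : ∀ (c : ℝ) u v, T (c • u) v = c * T u v := fun c u v => by
      simp only [hT, Psi_smul, Om_smul_left, Om_smul_right, LOm_smull]; ring
    have haddr : ∀ u v v', T u (v + v') = T u v + T u v' := fun u v v' => by
      simp only [hT, Psi_add G hG, Om_add_left, Om_add_right, LOm_addr]; ring
    have hsmulr : ∀ (c : ℝ) u v, T u (c • v) = c * T u v := fun c u v => by
      simp only [hT, Psi_smul, Om_smul_left, Om_smul_right, LOm_smulr]; ring
    have hanti : ∀ u v, T u v = - T v u := fun u v => by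
      have h1 := Om_anti θ0 θc p (Psi G p u) v
      have h2 := Om_anti θ0 θc p u (Psi G p v)
      have h3 := LOm_anti θ0 θc G p u v
      simp only [hT]
      linarith
    have hker : ∀ u v : E n, u.1 = 0 → v.1 = 0 → T u v = 0 := by
      refine T_basis_vanish T haddl hsmull haddr hsmulr ?_ ?_ ?_ ?_
      · intro i j
        simp only [hT]
        have := hxx p i j
        linarith
      · intro i j
        simp only [hT]
        rw [comp_xy p i j, h4 p j i]
        ring
      · intro i j
        have h1 : T (pdx j) (pdy i) = 0 := by
          simp only [hT]
          rw [comp_xy p j i, h4 p i j]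
          ring
        rw [hanti (pdy i) (pdx j), h1, neg_zero]
      · intro i j
        exact comp_yy p i j
    have key : ∀ u v : E n,
        LOm θ0 θc G p u v
            - (Om θ0 θc p (Psi G p u) v + Om θ0 θc p u (Psi G p v))
          = u.1 * T (Ssp G p) v - v.1 * T (Ssp G p) u :=
      fun u v => T_split T haddl hsmull haddr hsmulr hanti (Ssp_fst G p) hker u v
    rw [key (X p) (Y p), key (Y p) (Z p), key (Z p) (X p)]
    ring

end Aux

/-- Let `θ = θ₀ dt + Σᵢ θᵢ δxⁱ` be a semi-basic 1-form on `E`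
which is not `d_J`-closed.  Then `L_Sθ` is closed if and only if:
(H1) `(d_Jθ)∧dt = 0`; (H2) `(d_hθ)∧dt = 0`; (H3) `(d_Φθ)∧dt = 0`;
(H4) `(∇dθ)∧dt = 0` with `∇dθ = L_S(dθ) − i_Ψ(dθ)`; and
(DS) the 1-form `i_S dθ` is a dual symmetry of `S`, i.e. `L_S(i_S dθ) = 0`. -/
theorem stmt16 (n : ℕ) (hn : 1 ≤ n) (G : E n → Fin n → ℝ) (hG : Cinf G)
    (θ0 : E n → ℝ) (θc : Fin n → E n → ℝ) (h0 : Cinf θ0) (hc : ∀ i, Cinf (θc i))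
    (hnJ : ¬ ∀ X Y : E n → E n, Cinf X → Cinf Y → ∀ p : E n,
      dJf (sbform θ0 θc) X Y p = 0) :
    (∀ X Y : E n → E n, Cinf X → Cinf Y → ∀ p : E n,
        extDop (lieD (Ssp G) (sbform θ0 θc)) X Y p = 0)
    ↔ ((∀ X Y Z : E n → E n, Cinf X → Cinf Y → Cinf Z → ∀ p : E n,
          dJf (sbform θ0 θc) X Y p * (Z p).1
          + dJf (sbform θ0 θc) Y Z p * (X p).1
          + dJf (sbform θ0 θc) Z X p * (Y p).1 = 0)
        ∧ (∀ X Y Z : E n → E n, Cinf X → Cinf Y → Cinf Z → ∀ p : E n,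
            dhf G (sbform θ0 θc) X Y p * (Z p).1
            + dhf G (sbform θ0 θc) Y Z p * (X p).1
            + dhf G (sbform θ0 θc) Z X p * (Y p).1 = 0)
        ∧ (∀ X Y Z : E n → E n, Cinf X → Cinf Y → Cinf Z → ∀ p : E n,
            dPhif G (sbform θ0 θc) X Y p * (Z p).1
            + dPhif G (sbform θ0 θc) Y Z p * (X p).1
            + dPhif G (sbform θ0 θc) Z X p * (Y p).1 = 0)
        ∧ (∀ X Y Z : E n → E n, Cinf X → Cinf Y → Cinf Z → ∀ p : E n,
            nabD G (sbform θ0 θc) X Y p * (Z p).1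
            + nabD G (sbform θ0 θc) Y Z p * (X p).1
            + nabD G (sbform θ0 θc) Z X p * (Y p).1 = 0)
        ∧ (∀ X : E n → E n, Cinf X → ∀ p : E n,
            fderiv ℝ (extD (sbform θ0 θc) (Ssp G) X) p (Ssp G p)
              - extD (sbform θ0 θc) (Ssp G) (lieb (Ssp G) X) p = 0)) := by
  clear hn hnJ
  rw [B0 G h0 hc hG, B1 G h0 hc hG, B2 G h0 hc hG, B3 G h0 hc hG, B4 G h0 hc hG,
    B5 G h0 hc hG]
  constructor
  · intro hL
    have hC1 : ∀ q : E n, C1 (θc := θc) q := fun q i j => by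
      have hq := hL q (pdy i) (pdy j)
      rw [LOm_yy G h0 hc hG] at hq
      linarith
    have hxy0 : ∀ (q : E n) (i j : Fin n), -(vfd (Ssp G) (gf θc j i) q) + Af θc i j q
        + 2 * ∑ k, Nc G k j q * gf θc k i q = 0 := fun q i j => by
      have hq := hL q (pdx i) (pdy j)
      rw [LOm_xy G h0 hc hG] at hq
      linarith
    have hC4 := ALG0C4 G hC1 hxy0
    have hC2 := ALG0C2 G hC1 hxy0
    have hC3 : ∀ q : E n, C3 (θc := θc) G q := fun q i j => by
      have hq := hL q (pdx i) (pdx j)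
      rw [LOm_xx G h0 hc hG] at hq
      have halg := ALG2 G hc hG hC1 hC2 hC4 q i j
      show (∑ k, Rjac G k i q * gf θc k j q) = ∑ k, Rjac G k j q * gf θc k i q
      linarith
    refine ⟨hC1, hC2, hC3, ⟨hC4, fun q i j => ?_⟩, fun p w => hL p (Ssp G p) w⟩
    rw [hL q (pdx i) (pdx j), OmPsi_xx1 G h0 hc q i j, OmPsi_xx2 G h0 hc q i j]
    have := ALG4 G (hC1 q) (hC2 q) (hC3 q) i j
    linarith
  · rintro ⟨h1, h2, h3, ⟨h4, hxx⟩, hDS⟩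
    intro p u v
    set T : E n → E n → ℝ := fun u v => LOm θ0 θc G p u v with hT
    have haddl : ∀ u u' v, T (u + u') v = T u v + T u' v := fun u u' v =>
      LOm_addl G p u u' v
    have hsmull : ∀ (c : ℝ) u v, T (c • u) v = c * T u v := fun c u v =>
      LOm_smull G p c u v
    have haddr : ∀ u v v', T u (v + v') = T u v + T u v' := fun u v v' =>
      LOm_addr G p u v v'
    have hsmulr : ∀ (c : ℝ) u v, T u (c • v) = c * T u v := fun c u v =>
      LOm_smulr G p c u v
    have hanti : ∀ u v, T u v = - T v u := fun u v => LOm_anti θ0 θc G p u v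
    have hker : ∀ u v : E n, u.1 = 0 → v.1 = 0 → T u v = 0 := by
      refine T_basis_vanish T haddl hsmull haddr hsmulr ?_ ?_ ?_ ?_
      · intro i j
        show LOm θ0 θc G p (pdx i) (pdx j) = 0
        rw [LOm_xx G h0 hc hG, ALG2 G hc hG h1 h2 h4 p i j]
        have := h3 p i j
        linarith
      · intro i j
        show LOm θ0 θc G p (pdx i) (pdy j) = 0
        rw [LOm_xy G h0 hc hG]
        exact ALG3 G (h1 p) (h2 p) (h4 p) i j
      · intro i j
        have hz : T (pdx j) (pdy i) = 0 := by
          show LOm θ0 θc G p (pdx j) (pdy i) = 0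
          rw [LOm_xy G h0 hc hG]
          exact ALG3 G (h1 p) (h2 p) (h4 p) j i
        rw [hanti (pdy i) (pdx j), hz, neg_zero]
      · intro i j
        show LOm θ0 θc G p (pdy i) (pdy j) = 0
        rw [LOm_yy G h0 hc hG, h1 p i j]
        ring
    have key : LOm θ0 θc G p u v
        = u.1 * T (Ssp G p) v - v.1 * T (Ssp G p) u :=
      T_split T haddl hsmull haddr hsmulr hanti (Ssp_fst G p) hker u v
    rw [key]
    have d1 : T (Ssp G p) v = 0 := hDS p v
    have d2 : T (Ssp G p) u = 0 := hDS p u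
    rw [d1, d2]
    ring
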